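/- arXiv:1707.04380 — 7 statements merged into one kernel-verified Lean document; each statement's English description precedes it below -/
import Mathlib

section
/- (Basic risk bounds.) Let r > 0, v = r/(1+r), and let π = (1−η)δ₀ + ην be a sparse prior with η ∈ (0,1) and ν a probability measure on ℝ. Then for every θ ∈ ℝ, θ²/(2r) − E log N_{θ,v}(Z) ≤ ρ(θ, p̂_π) ≤ θ²/(2r) + E log D_θ(Z), where Z ~ N(0,1), N_{θ,v}(z) = 1 + (η/(1−η)) ∫ exp( μz/√v + μθ/v − μ²/(2v) ) ν(dμ), and D_θ(z) = N_{θ,1}(z). -/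
open MeasureTheory ProbabilityTheory Real Filter Set

noncomputable section

/-- Density of the `N(m, v)` distribution (variance `v`). -/
def gpdf (m v z : ℝ) : ℝ := gaussianPDFReal m v.toNNReal z

/-- The `N(m, v)` measure on `ℝ`. -/
def gmeas (m v : ℝ) : Measure ℝ := gaussianReal m v.toNNReal

/-- Density of `N_n(θ, v I)` on `ℝⁿ`. -/
def gpdfN (n : ℕ) (θ : Fin n → ℝ) (v : ℝ) (z : Fin n → ℝ) : ℝ :=
  ∏ i, gpdf (θ i) v (z i)

/-- The `N_n(θ, v I)` measure on `ℝⁿ`. -/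
def gmeasN (n : ℕ) (θ : Fin n → ℝ) (v : ℝ) : Measure (Fin n → ℝ) :=
  Measure.pi (fun i => gmeas (θ i) v)

/-- Kullback-Leibler risk of a predictive density estimate `phat` (where `phat x` is the
estimated density of the future observation given past data `x`) in the model
`X ~ N_n(θ, I)`, `Y ~ N_n(θ, r I)`. -/
def klRisk (n : ℕ) (r : ℝ) (θ : Fin n → ℝ) (phat : (Fin n → ℝ) → (Fin n → ℝ) → ℝ) : ℝ :=
  ∫ x, (∫ y, Real.log (gpdfN n θ r y / phat x y) ∂(gmeasN n θ r)) ∂(gmeasN n θ 1)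

/-- Univariate Kullback-Leibler predictive risk. -/
def klRisk1 (r θ : ℝ) (phat : ℝ → ℝ → ℝ) : ℝ :=
  ∫ x, (∫ y, Real.log (gpdf θ r y / phat x y) ∂(gmeas θ r)) ∂(gmeas θ 1)

/-- `phat x` is a probability density for every `x`: a predictive density estimate. -/
def IsPredEst (n : ℕ) (phat : (Fin n → ℝ) → (Fin n → ℝ) → ℝ) : Prop :=
  ∀ x, (∀ y, 0 ≤ phat x y) ∧ ∫ y, phat x y = 1

/-- `ℓ₀`-sparse parameter set. -/
def Theta (n s : ℕ) : Set (Fin n → ℝ) := {θ | {i | θ i ≠ 0}.ncard ≤ s}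

/-- Bounded sparse parameter set. -/
def ThetaB (n s : ℕ) (t : ℝ) : Set (Fin n → ℝ) :=
  {θ | {i | θ i ≠ 0}.ncard ≤ s ∧ ∀ i, |θ i| ≤ t}

/-- Minimax Kullback-Leibler risk over a parameter set. -/
def minimaxRisk (n : ℕ) (r : ℝ) (Θ : Set (Fin n → ℝ)) : ℝ :=
  ⨅ phat : {p : (Fin n → ℝ) → (Fin n → ℝ) → ℝ // IsPredEst n p}, ⨆ θ ∈ Θ, klRisk n r θ phat.1

/-- Univariate Bayes predictive density for a prior `pr` on `ℝ`. -/
def bayesPDE (r : ℝ) (pr : Measure ℝ) (x y : ℝ) : ℝ :=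
  (∫ μ, gpdf μ r y * gpdf μ 1 x ∂pr) / (∫ μ, gpdf μ 1 x ∂pr)

/-- The product (coordinatewise) Bayes predictive density estimate built from prior `pr`. -/
def bayesPDEprod (n : ℕ) (r : ℝ) (pr : Measure ℝ) :
    (Fin n → ℝ) → (Fin n → ℝ) → ℝ :=
  fun x y => ∏ i, bayesPDE r pr (x i) (y i)

/-- oracle variance `v = r/(1+r)`. -/
def vv (r : ℝ) : ℝ := r / (1 + r)

/-- `λ(η) = √(2 v log η⁻¹)`. -/
def lam (r η : ℝ) : ℝ := Real.sqrt (2 * vv r * Real.log η⁻¹)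

/-- The sparse prior `(1-η)δ₀ + ην`. -/
def sparsePrior (η : ℝ) (ν : Measure ℝ) : Measure ℝ :=
  ENNReal.ofReal (1 - η) • Measure.dirac 0 + ENNReal.ofReal η • ν

/-- `N_{θ,v}(z) = 1 + (η/(1-η)) ∫ exp(μz/√v + μθ/v - μ²/(2v)) ν(dμ)`. -/
def Nfun (η : ℝ) (ν : Measure ℝ) (θ v z : ℝ) : ℝ :=
  1 + η / (1 - η) * ∫ μ, Real.exp (μ * z / Real.sqrt v + μ * θ / v - μ ^ 2 / (2 * v)) ∂ν

/-- `E log N_{θ,v}(Z)` for `Z ~ N(0,1)`. -/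
def ElogN (η : ℝ) (ν : Measure ℝ) (θ v : ℝ) : ℝ :=
  ∫ z, Real.log (Nfun η ν θ v z) ∂(gmeas 0 1)


open scoped NNReal ENNReal
set_option maxHeartbeats 1000000

namespace BRB


lemma integral_gReal {m : ℝ} {V : ℝ≥0} (hV : V ≠ 0) (f : ℝ → ℝ) :
    ∫ z, f z ∂(gaussianReal m V) = ∫ z, gaussianPDFReal m V z * f z := by
  rw [gaussianReal_of_var_ne_zero _ hV]
  have h1 : (gaussianPDF m V) = fun z => ((gaussianPDFReal m V z).toNNReal : ℝ≥0∞) := by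
    ext z; simp [gaussianPDF, ENNReal.ofReal]
  rw [h1, integral_withDensity_eq_integral_smul
    ((measurable_gaussianPDFReal m V).real_toNNReal) f]
  congr 1; ext z
  simp [NNReal.smul_def, Real.coe_toNNReal _ (gaussianPDFReal_nonneg m V z)]

lemma integrable_gReal_iff {m : ℝ} {V : ℝ≥0} (hV : V ≠ 0) {f : ℝ → ℝ} :
    Integrable f (gaussianReal m V) ↔
      Integrable (fun z => gaussianPDFReal m V z * f z) volume := by
  rw [gaussianReal_of_var_ne_zero _ hV]
  have h1 : (gaussianPDF m V) = fun z => ((gaussianPDFReal m V z).toNNReal : ℝ≥0∞) := by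
    ext z; simp [gaussianPDF, ENNReal.ofReal]
  rw [h1, integrable_withDensity_iff_integrable_smul₀
    ((measurable_gaussianPDFReal m V).real_toNNReal).aemeasurable]
  constructor <;> intro h <;> refine h.congr (ae_of_all _ fun z => ?_) <;>
    simp [NNReal.smul_def, Real.coe_toNNReal _ (gaussianPDFReal_nonneg m V z)]

lemma sq_mul_exp_le {b z : ℝ} (hb : 0 < b) :
    z ^ 2 * rexp (-b * z ^ 2) ≤ 2 / b * rexp (-(b / 2) * z ^ 2) := by
  have h1 : b / 2 * z ^ 2 ≤ rexp (b / 2 * z ^ 2) := by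
    linarith [Real.add_one_le_exp (b / 2 * z ^ 2)]
  have h2 : rexp (-b * z ^ 2) = rexp (-(b/2) * z ^ 2) * rexp (-(b/2) * z ^ 2) := by
    rw [← Real.exp_add]; ring_nf
  rw [h2]
  have h3 : z ^ 2 * rexp (-(b/2) * z ^ 2) ≤ 2 / b := by
    have e := Real.exp_pos (b / 2 * z ^ 2)
    have he : rexp (-(b/2) * z ^ 2) = (rexp (b / 2 * z ^ 2))⁻¹ := by
      rw [← Real.exp_neg]; ring_nf
    rw [he, le_div_iff₀ hb, mul_assoc, mul_comm (rexp _)⁻¹ b, ← mul_assoc,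
      mul_inv_le_iff₀ e]
    nlinarith [h1]
  calc z ^ 2 * (rexp (-(b/2) * z ^ 2) * rexp (-(b/2) * z ^ 2))
      = (z ^ 2 * rexp (-(b/2) * z ^ 2)) * rexp (-(b/2) * z ^ 2) := by ring
    _ ≤ 2 / b * rexp (-(b/2) * z ^ 2) := by
        apply mul_le_mul_of_nonneg_right h3 (le_of_lt (Real.exp_pos _))

lemma integrable_sq_mul_exp {b : ℝ} (hb : 0 < b) :
    Integrable (fun z : ℝ => z ^ 2 * rexp (-b * z ^ 2)) volume := by
  refine Integrable.mono' ((integrable_exp_neg_mul_sq (by positivity : (0:ℝ) < b/2)).const_mul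
    (2 / b)) ?_ (ae_of_all _ fun z => ?_)
  · exact (((measurable_id.pow_const 2).mul
      (((measurable_id.pow_const 2).const_mul (-b)).exp)).aestronglyMeasurable)
  · rw [Real.norm_eq_abs, abs_of_nonneg (by positivity)]
    exact sq_mul_exp_le hb


lemma integrable_sq_gReal (m : ℝ) {V : ℝ≥0} (hV : V ≠ 0) :
    Integrable (fun z => z ^ 2) (gaussianReal m V) := by
  rw [integrable_gReal_iff hV]
  have hVpos : (0:ℝ) < (V:ℝ) := by
    have := hV; positivity
  set b : ℝ := (2 * (V:ℝ))⁻¹ with hbdef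
  have hb : 0 < b := by positivity
  set C : ℝ := (Real.sqrt (2 * π * V))⁻¹ with hC
  have hC0 : 0 ≤ C := by positivity
  have key : ∀ z : ℝ, gaussianPDFReal m V z * z ^ 2
      = (C * rexp (-b * (z - m) ^ 2) * (z - m + m) ^ 2) := by
    intro z
    simp only [gaussianPDFReal, hC, hbdef]
    rw [show z - m + m = z by ring]
    congr 2
    congr 1
    ring
  simp only [key]
  have base : Integrable (fun z : ℝ => C * rexp (-b * z ^ 2) * (z + m) ^ 2) volume := by
    have h1 : Integrable (fun z : ℝ => C * (z ^ 2 * rexp (-b * z ^ 2))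
        + (C * (2 * |m|) * (|z| * rexp (-b * z ^ 2)) + C * m ^ 2 * rexp (-b * z ^ 2))) volume := by
      refine (((integrable_sq_mul_exp hb).const_mul C)).add (Integrable.add ?_ ?_)
      · refine Integrable.const_mul ?_ _
        refine Integrable.mono' ((integrable_exp_neg_mul_sq hb).add
            (integrable_sq_mul_exp hb)) ?_ (ae_of_all _ fun z => ?_)
        · exact ((measurable_norm.mul
            (((measurable_id.pow_const 2).const_mul (-b)).exp)).aestronglyMeasurable)
        · simp only [Pi.add_apply]
          rw [Real.norm_eq_abs, abs_of_nonneg (by positivity)]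
          have h2 : |z| ≤ 1 + z ^ 2 := by
            nlinarith [abs_nonneg z, sq_abs z, sq_nonneg (|z| - 1)]
          nlinarith [Real.exp_pos (-b * z ^ 2),
            mul_le_mul_of_nonneg_right h2 (le_of_lt (Real.exp_pos (-b * z ^ 2)))]
      · exact ((integrable_exp_neg_mul_sq hb).const_mul _)
    refine h1.mono' ?_ (ae_of_all _ fun z => ?_)
    · exact ((((((measurable_id.pow_const 2).const_mul (-b)).exp.const_mul C)).mul
        ((measurable_id.add_const m).pow_const 2)).aestronglyMeasurable)
    · rw [Real.norm_eq_abs, abs_of_nonneg (by positivity)]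
      have h2 : (z + m) ^ 2 ≤ z ^ 2 + 2 * |m| * |z| + m ^ 2 := by
        nlinarith [abs_nonneg z, abs_nonneg m, neg_abs_le z, le_abs_self z,
          neg_abs_le m, le_abs_self m, abs_mul m z, neg_abs_le (m*z), le_abs_self (m*z)]
      nlinarith [Real.exp_pos (-b * z ^ 2), abs_nonneg z, abs_nonneg m,
        mul_le_mul_of_nonneg_right h2 (le_of_lt (Real.exp_pos (-b * z ^ 2)))]
  simpa using base.comp_sub_right m

lemma integrable_quad_gReal (m : ℝ) {V : ℝ≥0} (hV : V ≠ 0) (a b c : ℝ) :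
    Integrable (fun z => a * z ^ 2 + b * z + c) (gaussianReal m V) := by
  have hsq := integrable_sq_gReal m hV
  have hid : Integrable (fun z : ℝ => z) (gaussianReal m V) := by
    refine ((integrable_const (1:ℝ)).add hsq).mono' aestronglyMeasurable_id
      (ae_of_all _ fun z => ?_)
    simp only [Pi.add_apply, Real.norm_eq_abs, id]
    nlinarith [abs_nonneg z, sq_abs z, sq_nonneg (|z| - 1)]
  exact ((hsq.const_mul a).add (hid.const_mul b)).add (integrable_const c)

lemma integrable_id_gReal (m : ℝ) {V : ℝ≥0} (hV : V ≠ 0) :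
    Integrable (fun z : ℝ => z) (gaussianReal m V) := by
  have h := integrable_quad_gReal m hV 0 1 0
  refine h.congr (ae_of_all _ fun z => by ring)


lemma gReal_map_affine (c m : ℝ) :
    (gaussianReal 0 1).map (fun z => c * z + m) = gaussianReal m (c ^ 2).toNNReal := by
  have h1 : (fun z : ℝ => c * z + m) = (fun u : ℝ => u + m) ∘ (fun z : ℝ => c * z) := rfl
  rw [h1, ← Measure.map_map (measurable_add_const m) (measurable_const_mul c),
    gaussianReal_map_const_mul c, gaussianReal_map_add_const m, mul_zero, zero_add]
  congr 1
  ext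
  simp [Real.coe_toNNReal _ (sq_nonneg c)]

lemma integral_id_gReal_std : ∫ z, z ∂(gaussianReal 0 1) = 0 := by
  have h1 : (gaussianReal 0 1).map (fun z => (-1) * z + 0) = gaussianReal 0 1 := by
    rw [gReal_map_affine]
    norm_num
  have h2 : ∫ z, z ∂(gaussianReal 0 1)
      = ∫ z, (-1) * z + 0 ∂(gaussianReal 0 1) := by
    nth_rewrite 1 [← h1]
    rw [integral_map (by fun_prop) (measurable_id'.aestronglyMeasurable)]
  simp only [add_zero, neg_one_mul] at h2
  rw [integral_neg] at h2
  linarith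

lemma integral_id_gReal (m s : ℝ) :
    ∫ z, z ∂(gaussianReal m (s ^ 2).toNNReal) = m := by
  rcases eq_or_ne s 0 with hs | hs
  · subst hs
    norm_num [gaussianReal_zero_var]
  have hV : ((s ^ 2).toNNReal : ℝ≥0) ≠ 0 := by
    simp only [ne_eq, Real.toNNReal_eq_zero, not_le]
    positivity
  rw [← gReal_map_affine s m, integral_map (by fun_prop) (measurable_id'.aestronglyMeasurable)]
  rw [integral_add ((integrable_id_gReal 0 one_ne_zero).const_mul s) (integrable_const m),
    integral_const_mul, integral_id_gReal_std]
  simp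

lemma combo_aux {α : ℝ} {B : ℝ≥0} (hB : (B:ℝ) = 1 - α ^ 2) (hB0 : (B:ℝ) ≠ 0) (x u : ℝ) :
    gaussianPDFReal 0 1 x * gaussianPDFReal (α * x) B u
      = gaussianPDFReal 0 1 u * gaussianPDFReal (α * u) B x := by
  have rearr : ∀ c1 c2 a b : ℝ, (c1 * rexp a) * (c2 * rexp b) = (c1 * c2) * rexp (a + b) := by
    intros; rw [Real.exp_add]; ring
  have h1 : (1:ℝ) - α ^ 2 ≠ 0 := hB ▸ hB0
  simp only [gaussianPDFReal, NNReal.coe_one]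
  rw [rearr, rearr]
  congr 2
  rw [hB]
  field_simp
  ring

lemma map_combo {α β : ℝ} (hβ : β ≠ 0) (h : α ^ 2 + β ^ 2 = 1) :
    Measure.map (fun p : ℝ × ℝ => α * p.1 + β * p.2)
      ((gaussianReal 0 1).prod (gaussianReal 0 1)) = gaussianReal 0 1 := by
  set B : ℝ≥0 := ⟨β ^ 2, sq_nonneg β⟩ * 1 with hBdef
  have hBc : (B:ℝ) = 1 - α ^ 2 := by
    rw [hBdef]
    show β ^ 2 * 1 = 1 - α ^ 2
    linarith
  have hB0 : B ≠ 0 := by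
    intro hc
    apply hβ
    have h2 : (B:ℝ) = 0 := by rw [hc]; simp
    have h3 : β ^ 2 = 0 := by
      have h2' : β ^ 2 * 1 = 0 := h2
      linarith
    exact pow_eq_zero_iff (n := 2) (by norm_num) |>.mp h3
  have hB0' : (B:ℝ) ≠ 0 := by exact_mod_cast NNReal.coe_ne_zero.mpr hB0
  have hmeas : Measurable (fun p : ℝ × ℝ => α * p.1 + β * p.2) := by fun_prop
  have hjc : Continuous fun q : ℝ × ℝ => gaussianPDFReal (α * q.1) B q.2 := by
    unfold gaussianPDFReal
    fun_prop
  have hjm : Measurable fun q : ℝ × ℝ => gaussianPDF (α * q.1) B q.2 := by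
    simp only [gaussianPDF]
    exact hjc.measurable.ennreal_ofReal
  ext s hs
  rw [Measure.map_apply hmeas hs, Measure.prod_apply (hmeas hs)]
  have hmap : ∀ x : ℝ, (gaussianReal 0 1) (Prod.mk x ⁻¹' ((fun p : ℝ × ℝ => α * p.1 + β * p.2) ⁻¹' s))
      = ∫⁻ u in s, gaussianPDF (α * x) B u := by
    intro x
    have h0 : (Prod.mk x ⁻¹' ((fun p : ℝ × ℝ => α * p.1 + β * p.2) ⁻¹' s))
        = (fun y => α * x + β * y) ⁻¹' s := rfl
    have h1 : (fun y : ℝ => α * x + β * y) = (fun u : ℝ => α * x + u) ∘ (fun y : ℝ => β * y) :=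
      rfl
    rw [h0, ← Measure.map_apply (by fun_prop) hs, h1,
      ← Measure.map_map (measurable_const_add _) (measurable_const_mul β),
      gaussianReal_map_const_mul β, gaussianReal_map_const_add (α * x), mul_zero, zero_add]
    exact gaussianReal_apply _ hB0 s
  simp_rw [hmap]
  have hg : Measurable fun x : ℝ => ∫⁻ u in s, gaussianPDF (α * x) B u :=
    Measurable.lintegral_prod_right' (f := fun q : ℝ × ℝ => gaussianPDF (α * q.1) B q.2) hjm
  rw [gaussianReal_of_var_ne_zero _ one_ne_zero,
    lintegral_withDensity_eq_lintegral_mul _ (measurable_gaussianPDF _ _) hg]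
  have step1 : ∀ x : ℝ, (gaussianPDF 0 1 * fun x => ∫⁻ u in s, gaussianPDF (α * x) B u) x
      = ∫⁻ u in s, gaussianPDF 0 1 x * gaussianPDF (α * x) B u := by
    intro x
    simp only [Pi.mul_apply]
    rw [← lintegral_const_mul _ (measurable_gaussianPDF (α * x) B)]
  simp_rw [step1]
  rw [lintegral_lintegral_swap]
  swap
  · exact ((measurable_gaussianPDF 0 1).comp measurable_fst |>.mul hjm).aemeasurable
  have step2 : ∀ u : ℝ, ∫⁻ x, gaussianPDF 0 1 x * gaussianPDF (α * x) B u = gaussianPDF 0 1 u := by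
    intro u
    have e1 : ∀ x : ℝ, gaussianPDF 0 1 x * gaussianPDF (α * x) B u
        = gaussianPDF 0 1 u * gaussianPDF (α * u) B x := by
      intro x
      simp only [gaussianPDF, ← ENNReal.ofReal_mul (gaussianPDFReal_nonneg _ _ _)]
      rw [combo_aux hBc hB0' x u]
    simp_rw [e1]
    rw [lintegral_const_mul _ (measurable_gaussianPDF (α * u) B),
      lintegral_gaussianPDF_eq_one _ hB0, mul_one]
  simp_rw [step2]
  rw [← withDensity_apply _ hs]


def Jf (ν : Measure ℝ) (b w : ℝ) : ℝ := ∫ t, rexp (t * w - t ^ 2 / (2 * b)) ∂ν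
def Nb (η : ℝ) (ν : Measure ℝ) (b w : ℝ) : ℝ := 1 + η / (1 - η) * Jf ν b w
def gvb (η : ℝ) (ν : Measure ℝ) (b w : ℝ) : ℝ := Real.log (Nb η ν b w)

variable {η b : ℝ} {ν : Measure ℝ}

lemma exp_arg_le (hb : 0 < b) (t w : ℝ) : t * w - t ^ 2 / (2 * b) ≤ b * w ^ 2 / 2 := by
  have key : b * w ^ 2 / 2 - (t * w - t ^ 2 / (2 * b)) = (b * w - t) ^ 2 / (2 * b) := by
    field_simp
    ring
  nlinarith [div_nonneg (sq_nonneg (b * w - t)) (by positivity : (0:ℝ) ≤ 2 * b)]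

lemma integrable_exp_lin (hb : 0 < b) [IsProbabilityMeasure ν] (w : ℝ) :
    Integrable (fun t => rexp (t * w - t ^ 2 / (2 * b))) ν := by
  refine (integrable_const (rexp (b * w ^ 2 / 2))).mono' ?_ (ae_of_all _ fun t => ?_)
  · exact (Continuous.aestronglyMeasurable (by fun_prop))
  · rw [Real.norm_eq_abs, abs_of_nonneg (le_of_lt (Real.exp_pos _))]
    exact Real.exp_le_exp.mpr (exp_arg_le hb t w)

lemma Jf_nonneg (w : ℝ) : 0 ≤ Jf ν b w :=
  integral_nonneg fun t => le_of_lt (Real.exp_pos _)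

lemma Jf_le (hb : 0 < b) [IsProbabilityMeasure ν] (w : ℝ) :
    Jf ν b w ≤ rexp (b * w ^ 2 / 2) := by
  have := integral_mono (μ := ν) (integrable_exp_lin hb w)
    (integrable_const (rexp (b * w ^ 2 / 2)))
    (fun t => Real.exp_le_exp.mpr (exp_arg_le hb t w))
  simpa [Jf] using this

lemma Nb_one_le (hη : η ∈ Set.Ioo (0:ℝ) 1) (w : ℝ) : 1 ≤ Nb η ν b w := by
  have h1 : 0 ≤ η / (1 - η) := by
    apply div_nonneg hη.1.le
    linarith [hη.2]
  have := mul_nonneg h1 (Jf_nonneg (ν := ν) (b := b) w)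
  simp only [Nb]
  linarith

lemma Nb_pos (hη : η ∈ Set.Ioo (0:ℝ) 1) (w : ℝ) : 0 < Nb η ν b w :=
  lt_of_lt_of_le one_pos (Nb_one_le hη w)

lemma gvb_nonneg (hη : η ∈ Set.Ioo (0:ℝ) 1) (w : ℝ) : 0 ≤ gvb η ν b w :=
  Real.log_nonneg (Nb_one_le hη w)

lemma gvb_le (hη : η ∈ Set.Ioo (0:ℝ) 1) (hb : 0 < b) [IsProbabilityMeasure ν] (w : ℝ) :
    gvb η ν b w ≤ Real.log (1 + η / (1 - η)) + b * w ^ 2 / 2 := by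
  have hc : 0 ≤ η / (1 - η) := div_nonneg hη.1.le (by linarith [hη.2])
  have h1 : Nb η ν b w ≤ (1 + η / (1 - η)) * rexp (b * w ^ 2 / 2) := by
    have h2 : Nb η ν b w ≤ 1 + η / (1 - η) * rexp (b * w ^ 2 / 2) := by
      simp only [Nb]
      have := mul_le_mul_of_nonneg_left (Jf_le (ν := ν) hb w) hc
      linarith
    have h3 : (1:ℝ) ≤ rexp (b * w ^ 2 / 2) := by
      rw [Real.one_le_exp_iff]
      positivity
    nlinarith
  calc gvb η ν b w ≤ Real.log ((1 + η / (1 - η)) * rexp (b * w ^ 2 / 2)) :=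
        Real.log_le_log (Nb_pos hη w) h1
    _ = Real.log (1 + η / (1 - η)) + b * w ^ 2 / 2 := by
        rw [Real.log_mul (by positivity) (ne_of_gt (Real.exp_pos _)), Real.log_exp]

lemma measurable_Jf (b : ℝ) (ν : Measure ℝ) [SFinite ν] : Measurable (Jf ν b) := by
  have h1 : StronglyMeasurable fun q : ℝ × ℝ => rexp (q.2 * q.1 - q.2 ^ 2 / (2 * b)) :=
    Continuous.stronglyMeasurable (by fun_prop)
  exact h1.integral_prod_right'.measurable

lemma measurable_gvb (η b : ℝ) (ν : Measure ℝ) [SFinite ν] : Measurable (gvb η ν b) := by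
  apply Measurable.log
  exact ((measurable_Jf b ν).const_mul _).const_add _

lemma integrable_gvb (hη : η ∈ Set.Ioo (0:ℝ) 1) (hb : 0 < b) [IsProbabilityMeasure ν]
    {m : ℝ} {V : ℝ≥0} (hV : V ≠ 0)
    (hsq : Integrable (fun z => z ^ 2) (gaussianReal m V)) :
    Integrable (fun w => gvb η ν b w) (gaussianReal m V) := by
  refine Integrable.mono' ((hsq.const_mul (b / 2)).add
    (integrable_const (Real.log (1 + η / (1 - η))))) ?_ (ae_of_all _ fun w => ?_)
  · exact (measurable_gvb η b ν).aestronglyMeasurable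
  · simp only [Pi.add_apply]
    rw [Real.norm_eq_abs, abs_of_nonneg (gvb_nonneg hη w)]
    have := gvb_le hη hb (ν := ν) w
    linarith [this]

lemma integral_sparsePrior (hη : η ∈ Set.Ioo (0:ℝ) 1) [IsProbabilityMeasure ν]
    (f : ℝ → ℝ) (hm : Measurable f) {C : ℝ} (hbd : ∀ x, ‖f x‖ ≤ C) :
    ∫ x, f x ∂(sparsePrior η ν) = (1 - η) * f 0 + η * ∫ x, f x ∂ν := by
  have hd : Integrable f (Measure.dirac (0:ℝ)) := by
    refine ⟨hm.aestronglyMeasurable, ?_⟩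
    rw [HasFiniteIntegral, lintegral_dirac]
    exact ENNReal.coe_lt_top
  have hν : Integrable f ν :=
    (integrable_const C).mono' hm.aestronglyMeasurable (ae_of_all _ hbd)
  rw [sparsePrior, integral_add_measure (hd.smul_measure ENNReal.ofReal_ne_top)
      (hν.smul_measure ENNReal.ofReal_ne_top),
    integral_smul_measure, integral_smul_measure, integral_dirac,
    ENNReal.toReal_ofReal (by linarith [hη.2] : (0:ℝ) ≤ 1 - η),
    ENNReal.toReal_ofReal hη.1.le]
  simp [smul_eq_mul]

lemma gpdf_shift {V : ℝ} (hV : 0 < V) (m y : ℝ) :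
    gpdf m V y = gpdf 0 V y * rexp (m * y / V - m ^ 2 / (2 * V)) := by
  have rearr : ∀ c a b : ℝ, c * rexp a * rexp b = c * rexp (a + b) := by
    intros; rw [Real.exp_add]; ring
  simp only [gpdf, gaussianPDFReal, Real.coe_toNNReal _ hV.le]
  rw [rearr]
  congr 1
  field_simp
  ring

lemma gpdf_pos {V : ℝ} (hV : 0 < V) (m y : ℝ) : 0 < gpdf m V y := by
  apply gaussianPDFReal_pos
  simp only [ne_eq, Real.toNNReal_eq_zero, not_le]
  exact hV

lemma gpdf_le {V : ℝ} (hV : 0 < V) (m y : ℝ) : gpdf m V y ≤ (Real.sqrt (2 * π * V))⁻¹ := by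
  simp only [gpdf, gaussianPDFReal, Real.coe_toNNReal _ hV.le]
  have h1 : rexp (-(y - m) ^ 2 / (2 * V)) ≤ 1 := by
    rw [Real.exp_le_one_iff, neg_div]
    exact neg_nonpos.mpr (by positivity)
  have h2 : (0:ℝ) ≤ (Real.sqrt (2 * π * V))⁻¹ := by positivity
  nlinarith


section evars
variable {η b : ℝ} {ν : Measure ℝ}
section claims
variable {r : ℝ} (hr : 0 < r) (hη : η ∈ Set.Ioo (0:ℝ) 1) [IsProbabilityMeasure ν]

lemma measurable_gpdf_in_mean (V x : ℝ) : Measurable fun m => gpdf m V x := by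
  unfold gpdf gaussianPDFReal
  fun_prop

include hη in
lemma claimA (x : ℝ) :
    ∫ m, gpdf m 1 x ∂(sparsePrior η ν) = (1 - η) * (gpdf 0 1 x * Nb η ν 1 x) := by
  have h1η : (1:ℝ) - η ≠ 0 := by have := hη.2; intro h; linarith
  rw [integral_sparsePrior hη _ (measurable_gpdf_in_mean 1 x)
    (C := (Real.sqrt (2 * π * 1))⁻¹) (fun m => by
      rw [Real.norm_eq_abs, abs_of_pos (gpdf_pos one_pos m x)]
      exact gpdf_le one_pos m x)]
  have h2 : ∫ m, gpdf m 1 x ∂ν = gpdf 0 1 x * Jf ν 1 x := by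
    have h3 : ∀ m : ℝ, gpdf m 1 x = gpdf 0 1 x * rexp (m * x - m ^ 2 / (2 * 1)) := by
      intro m
      rw [gpdf_shift one_pos m x]
      congr 2
      ring
    rw [integral_congr_ae (ae_of_all _ h3), integral_const_mul]
    rfl
  rw [h2]
  simp only [Nb]
  field_simp

include hη hr in
lemma claimB (x y : ℝ) :
    ∫ m, gpdf m r y * gpdf m 1 x ∂(sparsePrior η ν)
      = (1 - η) * (gpdf 0 r y * gpdf 0 1 x * Nb η ν (vv r) (x + y / r)) := by
  have h1η : (1:ℝ) - η ≠ 0 := by have := hη.2; intro h; linarith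
  have h1r : (1:ℝ) + r ≠ 0 := by positivity
  have hbd : ∀ m : ℝ, ‖gpdf m r y * gpdf m 1 x‖
      ≤ (Real.sqrt (2 * π * r))⁻¹ * (Real.sqrt (2 * π * 1))⁻¹ := by
    intro m
    rw [Real.norm_eq_abs, abs_of_pos (mul_pos (gpdf_pos hr m y) (gpdf_pos one_pos m x))]
    exact mul_le_mul (gpdf_le hr m y) (gpdf_le one_pos m x)
      (gpdf_pos one_pos m x).le (by positivity)
  rw [integral_sparsePrior hη (fun m => gpdf m r y * gpdf m 1 x) ((measurable_gpdf_in_mean r y).mul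
    (measurable_gpdf_in_mean 1 x)) hbd]
  have h2 : ∫ m, gpdf m r y * gpdf m 1 x ∂ν
      = gpdf 0 r y * gpdf 0 1 x * Jf ν (vv r) (x + y / r) := by
    have h3 : ∀ m : ℝ, gpdf m r y * gpdf m 1 x
        = gpdf 0 r y * gpdf 0 1 x * rexp (m * (x + y / r) - m ^ 2 / (2 * vv r)) := by
      intro m
      rw [gpdf_shift hr m y, gpdf_shift one_pos m x]
      rw [show ∀ a b c d : ℝ, a * rexp b * (c * rexp d) = a * c * rexp (b + d) by
        intros; rw [Real.exp_add]; ring]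
      congr 1
      unfold vv
      field_simp
      ring
    rw [integral_congr_ae (ae_of_all _ h3), integral_const_mul]
    rfl
  rw [h2]
  simp only [Nb]
  field_simp

include hη hr in
lemma claimD (x y : ℝ) :
    Real.log (gpdf θ r y / bayesPDE r (sparsePrior η ν) x y)
      = θ / r * y - θ ^ 2 / (2 * r) - gvb η ν (vv r) (x + y / r) + gvb η ν 1 x := by
  have h1η : (1:ℝ) - η ≠ 0 := by have := hη.2; intro h; linarith
  have hNv := Nb_pos (ν := ν) (b := vv r) hη (x + y / r)
  have hN1 := Nb_pos (ν := ν) (b := 1) hη x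
  have hQ1 : 0 < gpdf 0 1 x := gpdf_pos one_pos 0 x
  have hQr : 0 < gpdf 0 r y := gpdf_pos hr 0 y
  have hπ : bayesPDE r (sparsePrior η ν) x y
      = gpdf 0 r y * (Nb η ν (vv r) (x + y / r) / Nb η ν 1 x) := by
    unfold bayesPDE
    rw [claimA hη x, claimB hr hη x y]
    have key : ∀ a b nv n1 c : ℝ, b ≠ 0 → n1 ≠ 0 → c ≠ 0 →
        (c * (a * b * nv)) / (c * (b * n1)) = a * (nv / n1) := by
      intros a b nv n1 c hb hn1 hc
      field_simp
    exact key _ _ _ _ _ (ne_of_gt hQ1) (ne_of_gt hN1) h1η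
  rw [hπ, gpdf_shift hr θ y]
  have hE : (0:ℝ) < rexp (θ * y / r - θ ^ 2 / (2 * r)) := Real.exp_pos _
  rw [Real.log_div (ne_of_gt (mul_pos hQr hE)) (ne_of_gt (mul_pos hQr (div_pos hNv hN1))),
    Real.log_mul (ne_of_gt hQr) (ne_of_gt hE),
    Real.log_mul (ne_of_gt hQr) (ne_of_gt (div_pos hNv hN1)),
    Real.log_div (ne_of_gt hNv) (ne_of_gt hN1), Real.log_exp]
  unfold gvb
  ring
end claims

end evars
lemma map_combo' {a b : ℝ} (hb : b ≠ 0) :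
    Measure.map (fun p : ℝ × ℝ => a * p.1 + b * p.2)
      ((gaussianReal 0 1).prod (gaussianReal 0 1))
      = gaussianReal 0 (a ^ 2 + b ^ 2).toNNReal := by
  have hs2 : 0 < a ^ 2 + b ^ 2 := by positivity
  set s : ℝ := Real.sqrt (a ^ 2 + b ^ 2) with hsdef
  have hs : 0 < s := Real.sqrt_pos.mpr hs2
  have hss : s ^ 2 = a ^ 2 + b ^ 2 := Real.sq_sqrt hs2.le
  have h1 : (fun p : ℝ × ℝ => a * p.1 + b * p.2)
      = (fun u : ℝ => s * u + 0) ∘ (fun p : ℝ × ℝ => (a/s) * p.1 + (b/s) * p.2) := by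
    funext p
    simp only [Function.comp_apply]
    field_simp
    ring
  have h2 : (a/s) ^ 2 + (b/s) ^ 2 = 1 := by
    field_simp [hss]
    exact hss.symm
  rw [h1, ← Measure.map_map (by fun_prop) (by fun_prop),
    map_combo (div_ne_zero hb hs.ne') h2, gReal_map_affine s 0]
  rw [hss]

lemma ElogN_nonneg {η : ℝ} (hη : η ∈ Set.Ioo (0:ℝ) 1) (ν : Measure ℝ) (θ V : ℝ) :
    0 ≤ ElogN η ν θ V := by
  have hc : 0 ≤ η / (1 - η) := div_nonneg hη.1.le (by linarith [hη.2])
  refine integral_nonneg fun z => Real.log_nonneg ?_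
  unfold Nfun
  exact le_add_of_nonneg_right (mul_nonneg hc
    (integral_nonneg fun t => (Real.exp_pos _).le))


end BRB
open BRB

/-- Basic risk bounds: for the sparse prior `π = (1-η)δ₀ + ην`,
`θ²/(2r) - E log N_{θ,v}(Z) ≤ ρ(θ, p̂_π) ≤ θ²/(2r) + E log D_θ(Z)`. -/
theorem basic_risk_bounds (r η : ℝ) (hr : 0 < r) (hη : η ∈ Set.Ioo (0 : ℝ) 1)
    (ν : Measure ℝ) [IsProbabilityMeasure ν] (θ : ℝ) :
    θ ^ 2 / (2 * r) - ElogN η ν θ (vv r)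
        ≤ klRisk1 r θ (bayesPDE r (sparsePrior η ν))
      ∧ klRisk1 r θ (bayesPDE r (sparsePrior η ν))
        ≤ θ ^ 2 / (2 * r) + ElogN η ν θ 1 := by
  have h1r : (0:ℝ) < 1 + r := by linarith
  have hv : 0 < vv r := div_pos hr h1r
  have hr' : r ≠ 0 := hr.ne'
  have hsr : Real.sqrt r ≠ 0 := by positivity
  have hsrr : Real.sqrt r * Real.sqrt r = r := Real.mul_self_sqrt hr.le
  have hone : ((1:ℝ)).toNNReal = 1 := Real.toNNReal_one
  have hone' : ((1:ℝ)).toNNReal ≠ 0 := by rw [hone]; exact one_ne_zero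
  have hrnn : (r.toNNReal : ℝ≥0) ≠ 0 := by
    simp only [ne_eq, Real.toNNReal_eq_zero, not_le]; exact hr
  have hgm01 : gmeas 0 1 = gaussianReal 0 1 := by simp only [gmeas]; rw [hone]
  haveI i1 : IsProbabilityMeasure (gmeas θ 1) :=
    inferInstanceAs (IsProbabilityMeasure (gaussianReal θ (1:ℝ).toNNReal))
  haveI i2 : IsProbabilityMeasure (gmeas θ r) :=
    inferInstanceAs (IsProbabilityMeasure (gaussianReal θ r.toNNReal))
  haveI i0 : IsProbabilityMeasure (gmeas 0 1) :=
    inferInstanceAs (IsProbabilityMeasure (gaussianReal 0 (1:ℝ).toNNReal))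
  set PP : Measure (ℝ × ℝ) := (gmeas θ 1).prod (gmeas θ r) with hPP
  haveI iPP : IsProbabilityMeasure PP := by rw [hPP]; infer_instance
  have hγ1 : Measure.map (fun z : ℝ => 1 * z + θ) (gaussianReal 0 1) = gmeas θ 1 := by
    rw [gReal_map_affine]
    simp only [gmeas]
    norm_num
  have hγr : Measure.map (fun z : ℝ => Real.sqrt r * z + θ) (gaussianReal 0 1) = gmeas θ r := by
    rw [gReal_map_affine]
    simp only [gmeas]
    congr 1
    rw [Real.sq_sqrt hr.le]
  set W : ℝ≥0 := ((1:ℝ) + 1/r).toNNReal with hWdef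
  have hW0 : W ≠ 0 := by
    simp only [hWdef, ne_eq, Real.toNNReal_eq_zero, not_le]
    positivity
  have hmapS : Measure.map (fun p : ℝ × ℝ => p.1 + p.2 / r) PP
      = gaussianReal (θ + θ/r) W := by
    rw [hPP, ← hγ1, ← hγr,
      Measure.map_prod_map _ _ (by fun_prop) (by fun_prop),
      Measure.map_map (by fun_prop) (by fun_prop)]
    have hcomp : ((fun p : ℝ × ℝ => p.1 + p.2 / r) ∘
          (Prod.map (fun z : ℝ => 1 * z + θ) (fun z : ℝ => Real.sqrt r * z + θ)))
        = (fun u : ℝ => u + (θ + θ/r)) ∘ (fun p : ℝ × ℝ => 1 * p.1 + (1/Real.sqrt r) * p.2) := by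
      funext p
      simp only [Function.comp_apply, Prod.map_fst, Prod.map_snd]
      have key : (Real.sqrt r * p.2 + θ)/r = 1/Real.sqrt r * p.2 + θ/r := by
        rw [add_div]
        congr 1
        rw [div_eq_iff hr']
        field_simp
        linear_combination p.2 * hsrr
      rw [key]
      ring
    rw [hcomp, ← Measure.map_map (by fun_prop) (by fun_prop),
      map_combo' (by positivity : (1:ℝ)/Real.sqrt r ≠ 0),
      gaussianReal_map_add_const (θ + θ/r), zero_add]
    congr 2
    rw [div_pow, one_pow, Real.sq_sqrt hr.le]
  have hmapfst : Measure.map Prod.fst PP = gmeas θ 1 := by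
    rw [hPP, Measure.map_fst_prod, measure_univ, one_smul]
  have hmapsnd : Measure.map Prod.snd PP = gmeas θ r := by
    rw [hPP, Measure.map_snd_prod, measure_univ, one_smul]
  -- integrability
  have hsqr : Integrable (fun z : ℝ => z ^ 2) (gmeas θ r) := integrable_sq_gReal θ hrnn
  have hsnd : Integrable (fun p : ℝ × ℝ => p.2) PP := by
    have hid : Integrable (fun z : ℝ => z) (gmeas θ r) := by
      refine ((integrable_const (1:ℝ)).add hsqr).mono'
        measurable_id'.aestronglyMeasurable (ae_of_all _ fun z => ?_)
      simp only [Pi.add_apply, Real.norm_eq_abs]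
      nlinarith [abs_nonneg z, sq_abs z, sq_nonneg (|z| - 1)]
    have h5 : Integrable (fun z : ℝ => z) (Measure.map Prod.snd PP) := by
      rw [hmapsnd]; exact hid
    exact ((integrable_map_measure measurable_id'.aestronglyMeasurable
      measurable_snd.aemeasurable).mp h5).congr (ae_of_all _ fun p => rfl)
  have hA : Integrable (fun p : ℝ × ℝ => θ / r * p.2 - θ ^ 2 / (2 * r)) PP :=
    (hsnd.const_mul (θ / r)).sub (integrable_const _)
  have hB : Integrable (fun p : ℝ × ℝ => gvb η ν (vv r) (p.1 + p.2 / r)) PP := by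
    have h1 : Integrable (gvb η ν (vv r))
        (Measure.map (fun p : ℝ × ℝ => p.1 + p.2 / r) PP) := by
      rw [hmapS]
      exact integrable_gvb hη hv hW0 (integrable_sq_gReal _ hW0)
    exact ((integrable_map_measure (measurable_gvb η (vv r) ν).aestronglyMeasurable
      (by fun_prop)).mp h1).congr (ae_of_all _ fun p => rfl)
  have hC : Integrable (fun p : ℝ × ℝ => gvb η ν 1 p.1) PP := by
    have h1 : Integrable (gvb η ν 1) (Measure.map Prod.fst PP) := by
      rw [hmapfst]
      exact integrable_gvb hη one_pos hone' (integrable_sq_gReal _ hone')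
    exact ((integrable_map_measure (measurable_gvb η 1 ν).aestronglyMeasurable
      measurable_fst.aemeasurable).mp h1).congr (ae_of_all _ fun p => rfl)
  -- the three integrals
  have hI1 : ∫ p, (θ / r * p.2 - θ ^ 2 / (2 * r)) ∂PP = θ ^ 2 / (2 * r) := by
    rw [integral_sub (hsnd.const_mul (θ / r)) (integrable_const _), integral_const_mul,
      integral_const, probReal_univ]
    have h2 : ∫ p, p.2 ∂PP = θ := by
      have h3 := integral_map (μ := PP) measurable_snd.aemeasurable
        (measurable_id'.aestronglyMeasurable (μ := Measure.map Prod.snd PP))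
      rw [hmapsnd] at h3
      rw [← h3]
      have h4 : gmeas θ r = gaussianReal θ ((Real.sqrt r) ^ 2).toNNReal := by
        simp only [gmeas]
        rw [Real.sq_sqrt hr.le]
      rw [h4, integral_id_gReal]
    rw [h2]
    simp only [smul_eq_mul, one_mul]
    field_simp
    ring
  have hI2 : ∫ p, gvb η ν (vv r) (p.1 + p.2 / r) ∂PP = ElogN η ν θ (vv r) := by
    have h1 : ∫ p, gvb η ν (vv r) (p.1 + p.2 / r) ∂PP
        = ∫ w, gvb η ν (vv r) w ∂(gaussianReal (θ + θ/r) W) := by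
      rw [← hmapS, integral_map (by fun_prop)
        ((measurable_gvb η (vv r) ν).aestronglyMeasurable)]
    rw [h1]
    have hsv : Real.sqrt (vv r) ≠ 0 := by positivity
    have h2 : gaussianReal (θ + θ/r) W
        = Measure.map (fun z : ℝ => (1 / Real.sqrt (vv r)) * z + (θ + θ/r))
          (gaussianReal 0 1) := by
      rw [gReal_map_affine]
      congr 2
      rw [div_pow, one_pow, Real.sq_sqrt hv.le]
      unfold vv
      rw [hWdef]
      congr 1
      field_simp
      ring
    rw [h2, integral_map (((measurable_id'.const_mul _).add_const _).aemeasurable)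
      ((measurable_gvb η (vv r) ν).aestronglyMeasurable)]
    unfold ElogN
    rw [hgm01]
    refine integral_congr_ae (ae_of_all _ fun z => ?_)
    have hθv : θ / vv r = θ + θ / r := by
      unfold vv
      field_simp
      ring
    have harg : Nfun η ν θ (vv r) z
        = Nb η ν (vv r) (1 / Real.sqrt (vv r) * z + (θ + θ/r)) := by
      unfold Nfun Nb Jf
      have hInt : (∫ t, rexp (t * z / Real.sqrt (vv r) + t * θ / vv r - t ^ 2 / (2 * vv r)) ∂ν)
          = ∫ t, rexp (t * (1 / Real.sqrt (vv r) * z + (θ + θ/r)) - t ^ 2 / (2 * vv r)) ∂ν := by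
        refine integral_congr_ae (ae_of_all _ fun t => ?_)
        refine congrArg rexp ?_
        have h6 : t * θ / vv r = t * (θ + θ / r) := by
          rw [mul_div_assoc, hθv]
        linear_combination h6
      rw [hInt]
    exact congrArg Real.log harg.symm
  have hI3 : ∫ p, gvb η ν 1 p.1 ∂PP = ElogN η ν θ 1 := by
    have h1 : ∫ p, gvb η ν 1 p.1 ∂PP = ∫ w, gvb η ν 1 w ∂(gmeas θ 1) := by
      rw [← hmapfst, integral_map measurable_fst.aemeasurable
        ((measurable_gvb η 1 ν).aestronglyMeasurable)]
    rw [h1, ← hγ1, integral_map (((measurable_id'.const_mul _).add_const _).aemeasurable)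
      ((measurable_gvb η 1 ν).aestronglyMeasurable)]
    unfold ElogN
    rw [hgm01]
    refine integral_congr_ae (ae_of_all _ fun z => ?_)
    have harg : Nfun η ν θ 1 z = Nb η ν 1 (1 * z + θ) := by
      unfold Nfun Nb Jf
      have hInt : (∫ t, rexp (t * z / Real.sqrt 1 + t * θ / 1 - t ^ 2 / (2 * 1)) ∂ν)
          = ∫ t, rexp (t * (1 * z + θ) - t ^ 2 / (2 * 1)) ∂ν := by
        refine integral_congr_ae (ae_of_all _ fun t => ?_)
        rw [Real.sqrt_one]
        refine congrArg rexp ?_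
        ring
      rw [hInt]
    exact congrArg Real.log harg.symm
  -- main identity
  have hkl : klRisk1 r θ (bayesPDE r (sparsePrior η ν))
      = θ ^ 2 / (2 * r) - ElogN η ν θ (vv r) + ElogN η ν θ 1 := by
    have hD := claimD (η := η) (ν := ν) (θ := θ) (r := r) hr hη
    simp only [klRisk1, hD]
    have hF : Integrable (Function.uncurry fun x y : ℝ =>
        θ / r * y - θ ^ 2 / (2 * r) - gvb η ν (vv r) (x + y / r) + gvb η ν 1 x) PP :=
      (hA.sub hB).add hC
    rw [MeasureTheory.integral_integral hF]
    show (∫ p : ℝ × ℝ, (θ / r * p.2 - θ ^ 2 / (2 * r) - gvb η ν (vv r) (p.1 + p.2 / r)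
      + gvb η ν 1 p.1) ∂PP) = _
    have hsub : Integrable (fun p : ℝ × ℝ =>
        θ / r * p.2 - θ ^ 2 / (2 * r) - gvb η ν (vv r) (p.1 + p.2 / r)) PP := hA.sub hB
    rw [integral_add hsub hC, integral_sub hA hB, hI1, hI2, hI3]
  constructor
  · rw [hkl]
    linarith [ElogN_nonneg hη ν θ 1]
  · rw [hkl]
    linarith [ElogN_nonneg hη ν θ (vv r)]

end
end

section
/- Let r > 0 and let π = (1−η)δ₀ + ην be a sparse prior with η ∈ (0,1) and ν a probability measure on ℝ. Then the Kullback–Leibler risk of the univariate Bayes predictive density at the origin satisfies ρ(0, p̂_π) ≤ log (1−η)⁻¹. (In particular ρ(0, p̂_π) = O(η) as η → 0.) -/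
open MeasureTheory ProbabilityTheory Real Filter Set

noncomputable section

namespace RiskAux

lemma gpdf_pos {v : ℝ} (hv : 0 < v) (m z : ℝ) : 0 < gpdf m v z :=
  gaussianPDFReal_pos m v.toNNReal z (Real.toNNReal_pos.mpr hv).ne'

lemma gpdf_nonneg (m v z : ℝ) : 0 ≤ gpdf m v z := gaussianPDFReal_nonneg _ _ _

lemma gpdf_cont (v : ℝ) : Continuous (fun p : ℝ × ℝ => gpdf p.1 v p.2) := by
  unfold gpdf gaussianPDFReal
  fun_prop

lemma gpdf_cont_left (v x : ℝ) : Continuous (fun m => gpdf m v x) := by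
  unfold gpdf gaussianPDFReal
  fun_prop

lemma gpdf_le (m v z : ℝ) : gpdf m v z ≤ (Real.sqrt (2 * π * v.toNNReal))⁻¹ := by
  unfold gpdf gaussianPDFReal
  have h1 : rexp (-(z - m) ^ 2 / (2 * (v.toNNReal : ℝ))) ≤ 1 := by
    rw [Real.exp_le_one_iff]
    apply div_nonpos_of_nonpos_of_nonneg
    · simp [sq_nonneg]
    · positivity
  calc (Real.sqrt (2 * π * v.toNNReal))⁻¹ * rexp (-(z - m) ^ 2 / (2 * (v.toNNReal : ℝ)))
      ≤ (Real.sqrt (2 * π * v.toNNReal))⁻¹ * 1 :=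
        mul_le_mul_of_nonneg_left h1 (by positivity)
    _ = _ := mul_one _

lemma integrable_of_bdd {f : ℝ → ℝ} {m : Measure ℝ} [IsFiniteMeasure m]
    (hmeas : AEStronglyMeasurable f m) (C : ℝ) (hb : ∀ x, ‖f x‖ ≤ C) : Integrable f m :=
  (integrable_const C).mono' hmeas (ae_of_all _ hb)

lemma sparsePrior_finite (η : ℝ) (ν : Measure ℝ) [IsProbabilityMeasure ν] :
    IsFiniteMeasure (sparsePrior η ν) := by
  constructor
  simp only [sparsePrior, Measure.add_apply, Measure.smul_apply, smul_eq_mul, measure_univ,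
    mul_one]
  exact ENNReal.add_lt_top.mpr ⟨ENNReal.ofReal_lt_top, ENNReal.ofReal_lt_top⟩

lemma integrable_sparsePrior {η : ℝ} (ν : Measure ℝ)
    [IsProbabilityMeasure ν] {f : ℝ → ℝ} (hfc : Continuous f) (C : ℝ) (hb : ∀ x, ‖f x‖ ≤ C) :
    Integrable f (sparsePrior η ν) := by
  have := sparsePrior_finite η ν
  exact integrable_of_bdd hfc.aestronglyMeasurable C hb

lemma integral_sparsePrior {η : ℝ} (hη0 : 0 ≤ η) (hη1 : η ≤ 1) (ν : Measure ℝ)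
    [IsProbabilityMeasure ν] {f : ℝ → ℝ} (hfc : Continuous f) (C : ℝ) (hb : ∀ x, ‖f x‖ ≤ C) :
    ∫ μ, f μ ∂(sparsePrior η ν) = (1 - η) * f 0 + η * ∫ μ, f μ ∂ν := by
  rw [sparsePrior, integral_add_measure
      ((integrable_of_bdd hfc.aestronglyMeasurable C hb).smul_measure ENNReal.ofReal_ne_top)
      ((integrable_of_bdd hfc.aestronglyMeasurable C hb).smul_measure ENNReal.ofReal_ne_top)]
  rw [integral_smul_measure, integral_smul_measure, integral_dirac]
  simp [ENNReal.toReal_ofReal, hη0, sub_nonneg.mpr hη1, smul_eq_mul]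

lemma integral_sparsePrior_ge {η : ℝ} (hη1 : η ≤ 1) (ν : Measure ℝ)
    [IsProbabilityMeasure ν] {f : ℝ → ℝ} (hfc : Continuous f) (C : ℝ) (hb : ∀ x, ‖f x‖ ≤ C)
    (hf0 : ∀ x, 0 ≤ f x) :
    (1 - η) * f 0 ≤ ∫ μ, f μ ∂(sparsePrior η ν) := by
  have h1 : (1 - η) * f 0 = ∫ μ, f μ ∂(ENNReal.ofReal (1 - η) • Measure.dirac 0) := by
    rw [integral_smul_measure, integral_dirac, ENNReal.toReal_ofReal (by linarith), smul_eq_mul]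
  rw [h1]
  refine integral_mono_measure (Measure.le_add_right le_rfl) (ae_of_all _ hf0) ?_
  exact integrable_sparsePrior ν hfc C hb

lemma one_toNNReal_ne : (1 : ℝ).toNNReal ≠ 0 := by simp

lemma integrable_prod_gpdf (ν : Measure ℝ) [IsProbabilityMeasure ν] :
    Integrable (fun p : ℝ × ℝ => gpdf p.1 1 p.2) (ν.prod volume) := by
  rw [integrable_prod_iff (gpdf_cont 1).aestronglyMeasurable]
  constructor
  · exact ae_of_all _ fun m => integrable_gaussianPDFReal m (1 : ℝ).toNNReal
  · have : ∀ m : ℝ, ∫ x, ‖gpdf m 1 x‖ = 1 := by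
      intro m
      rw [show (fun x => ‖gpdf m 1 x‖) = fun x => gpdf m 1 x from
        funext fun x => norm_of_nonneg (gpdf_nonneg _ _ _)]
      exact integral_gaussianPDFReal_eq_one m one_toNNReal_ne
    simp only [this]
    exact integrable_const 1

lemma integral_G (ν : Measure ℝ) [IsProbabilityMeasure ν] :
    ∫ x, (∫ m, gpdf m 1 x ∂ν) = 1 := by
  have h := integral_integral_swap (f := fun m x => gpdf m 1 x)
    (μ := ν) (ν := volume) (integrable_prod_gpdf ν)
  rw [← h]
  have h1 : ∀ m : ℝ, ∫ x, gpdf m 1 x = 1 := fun m =>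
    integral_gaussianPDFReal_eq_one m one_toNNReal_ne
  simp only [h1]
  simp

lemma integrable_G (ν : Measure ℝ) [IsProbabilityMeasure ν] :
    Integrable (fun x => ∫ m, gpdf m 1 x ∂ν) volume :=
  (integrable_prod_gpdf ν).integral_prod_right

lemma gmeas_eq : gmeas 0 1 = volume.withDensity
    (fun x => (Real.toNNReal (gpdf 0 1 x) : ENNReal)) := by
  rw [gmeas, gaussianReal_of_var_ne_zero 0 one_toNNReal_ne]
  rfl

lemma gpdf_meas : Measurable (gpdf 0 1) := measurable_gaussianPDFReal 0 (1 : ℝ).toNNReal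

lemma integral_gmeas_eq (g : ℝ → ℝ) :
    ∫ x, g x ∂(gmeas 0 1) = ∫ x, gpdf 0 1 x * g x := by
  rw [gmeas_eq, integral_withDensity_eq_integral_smul gpdf_meas.real_toNNReal g]
  congr 1
  ext x
  rw [NNReal.smul_def, smul_eq_mul, Real.coe_toNNReal _ (gpdf_nonneg 0 1 x)]

lemma integrable_gmeas_iff (g : ℝ → ℝ) :
    Integrable g (gmeas 0 1) ↔ Integrable (fun x => g x * gpdf 0 1 x) volume := by
  rw [gmeas_eq, integrable_withDensity_iff gpdf_meas.real_toNNReal.coe_nnreal_ennreal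
    (ae_of_all _ fun x => ENNReal.coe_lt_top)]
  constructor <;> intro h <;> refine h.congr (ae_of_all _ fun x => ?_) <;>
    simp [Real.coe_toNNReal _ (gpdf_nonneg 0 1 x)]

end RiskAux

open RiskAux in
/-- Risk at the origin: for the sparse prior `π = (1-η)δ₀ + ην`,
`ρ(0, p̂_π) ≤ log (1-η)⁻¹`. -/
theorem risk_at_zero_bound (r η : ℝ) (hr : 0 < r) (hη : η ∈ Set.Ioo (0 : ℝ) 1)
    (ν : Measure ℝ) [IsProbabilityMeasure ν] :
    klRisk1 r 0 (bayesPDE r (sparsePrior η ν)) ≤ Real.log (1 - η)⁻¹ := by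
  obtain ⟨hη0, hη1⟩ := hη
  have h1η : 0 < 1 - η := by linarith
  haveI := sparsePrior_finite η ν
  haveI hpr : IsProbabilityMeasure (gmeas 0 r) := by unfold gmeas; infer_instance
  haveI hp1 : IsProbabilityMeasure (gmeas 0 1) := by unfold gmeas; infer_instance
  set c : ℝ := η / (1 - η) with hc
  have hc0 : 0 ≤ c := div_nonneg hη0.le h1η.le
  set G : ℝ → ℝ := fun x => ∫ m, gpdf m 1 x ∂ν with hG
  have hG0 : ∀ x, 0 ≤ G x := fun x => integral_nonneg fun m => gpdf_nonneg _ _ _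
  have hφpos : ∀ x, 0 < gpdf 0 1 x := fun x => gpdf_pos one_pos 0 x
  set h : ℝ → ℝ := fun x => 1 + c * (G x / gpdf 0 1 x) with hh
  have hh1 : ∀ x, 1 ≤ h x := fun x => le_add_of_nonneg_right
    (mul_nonneg hc0 (div_nonneg (hG0 x) (hφpos x).le))
  have hhpos : ∀ x, 0 < h x := fun x => lt_of_lt_of_le one_pos (hh1 x)
  set a : ℝ := (1 - η)⁻¹ with ha
  have ha0 : 0 < a := inv_pos.mpr h1η
  have hloga0 : 0 ≤ Real.log a := by
    rw [ha, Real.log_inv]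
    exact neg_nonneg.mpr (Real.log_nonpos (by linarith) (by linarith))
  set C1 : ℝ := (Real.sqrt (2 * π * (1 : ℝ).toNNReal))⁻¹ with hC1
  set Cr : ℝ := (Real.sqrt (2 * π * r.toNNReal))⁻¹ with hCr
  have hb1 : ∀ m x : ℝ, ‖gpdf m 1 x‖ ≤ C1 := fun m x => by
    rw [norm_of_nonneg (gpdf_nonneg _ _ _)]; exact gpdf_le _ _ _
  have hD : ∀ x, ∫ m, gpdf m 1 x ∂(sparsePrior η ν) = (1 - η) * gpdf 0 1 x + η * G x :=
    fun x => integral_sparsePrior hη0.le hη1.le ν (gpdf_cont_left 1 x) C1 (fun m => hb1 m x)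
  have hDpos : ∀ x, 0 < ∫ m, gpdf m 1 x ∂(sparsePrior η ν) := by
    intro x
    rw [hD x]
    have h1 := hφpos x
    have h2 := hG0 x
    nlinarith
  have hNum : ∀ x y, (1 - η) * (gpdf 0 r y * gpdf 0 1 x)
      ≤ ∫ m, gpdf m r y * gpdf m 1 x ∂(sparsePrior η ν) := by
    intro x y
    refine integral_sparsePrior_ge hη1.le ν ((gpdf_cont_left r y).mul (gpdf_cont_left 1 x))
      (Cr * C1) (fun m => ?_) (fun m => mul_nonneg (gpdf_nonneg _ _ _) (gpdf_nonneg _ _ _))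
    rw [Pi.mul_apply, norm_mul, norm_of_nonneg (gpdf_nonneg _ _ _), norm_of_nonneg (gpdf_nonneg _ _ _)]
    exact mul_le_mul (gpdf_le _ _ _) (gpdf_le _ _ _) (gpdf_nonneg _ _ _) (by positivity)
  have hNumpos : ∀ x y, 0 < ∫ m, gpdf m r y * gpdf m 1 x ∂(sparsePrior η ν) := by
    intro x y
    refine lt_of_lt_of_le ?_ (hNum x y)
    have h1 := gpdf_pos hr 0 y
    have h2 := hφpos x
    exact mul_pos h1η (mul_pos h1 h2)
  have hhx : ∀ x, h x = (∫ m, gpdf m 1 x ∂(sparsePrior η ν)) / ((1 - η) * gpdf 0 1 x) := by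
    intro x
    rw [hD x, hh, hc]
    have h2 := (hφpos x).ne'
    field_simp
  have hF4 : ∀ x y, Real.log (gpdf 0 r y / bayesPDE r (sparsePrior η ν) x y)
      ≤ Real.log (h x) := by
    intro x y
    have hry := gpdf_pos hr 0 y
    have hφ := hφpos x
    have hDp := hDpos x
    have hNp := hNumpos x y
    have hrat : gpdf 0 r y / bayesPDE r (sparsePrior η ν) x y
        = gpdf 0 r y * (∫ m, gpdf m 1 x ∂(sparsePrior η ν))
          / (∫ m, gpdf m r y * gpdf m 1 x ∂(sparsePrior η ν)) := by
      rw [bayesPDE, div_div_eq_mul_div]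
    rw [hrat, hhx x]
    apply Real.log_le_log (div_pos (mul_pos hry hDp) hNp)
    have key : gpdf 0 r y * (∫ m, gpdf m 1 x ∂(sparsePrior η ν))
          / (∫ m, gpdf m r y * gpdf m 1 x ∂(sparsePrior η ν))
        ≤ gpdf 0 r y * (∫ m, gpdf m 1 x ∂(sparsePrior η ν))
          / ((1 - η) * (gpdf 0 r y * gpdf 0 1 x)) :=
      div_le_div_of_nonneg_left (mul_pos hry hDp).le (mul_pos h1η (mul_pos hry hφ)) (hNum x y)
    refine key.trans_eq ?_
    rw [mul_comm (1 - η) (gpdf 0 r y * gpdf 0 1 x), mul_assoc, mul_div_mul_left _ _ hry.ne',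
      mul_comm (gpdf 0 1 x) (1 - η)]
  have hF5 : ∀ x, (∫ y, Real.log (gpdf 0 r y / bayesPDE r (sparsePrior η ν) x y) ∂(gmeas 0 r))
      ≤ Real.log (h x) := by
    intro x
    by_cases hint : Integrable
      (fun y => Real.log (gpdf 0 r y / bayesPDE r (sparsePrior η ν) x y)) (gmeas 0 r)
    · calc ∫ y, Real.log (gpdf 0 r y / bayesPDE r (sparsePrior η ν) x y) ∂(gmeas 0 r)
          ≤ ∫ _, Real.log (h x) ∂(gmeas 0 r) :=
            integral_mono hint (integrable_const _) (fun y => hF4 x y)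
        _ = Real.log (h x) := by simp
    · rw [integral_undef hint]
      exact Real.log_nonneg (hh1 x)
  have hGφ_int : Integrable (fun x => G x / gpdf 0 1 x) (gmeas 0 1) := by
    rw [integrable_gmeas_iff]
    exact (integrable_G ν).congr
      (ae_of_all _ fun x => (div_mul_cancel₀ (G x) (hφpos x).ne').symm)
  have hGφ_val : ∫ x, G x / gpdf 0 1 x ∂(gmeas 0 1) = 1 := by
    rw [integral_gmeas_eq]
    have hcanc : ∀ x, gpdf 0 1 x * (G x / gpdf 0 1 x) = G x := fun x => by
      rw [mul_div_cancel₀ _ (hφpos x).ne']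
    simp only [hcanc]
    exact integral_G ν
  have hh_int : Integrable h (gmeas 0 1) := by
    rw [hh]
    exact (integrable_const 1).add (hGφ_int.const_mul c)
  have hh_val : ∫ x, h x ∂(gmeas 0 1) = a := by
    rw [hh]
    rw [integral_add (integrable_const 1) (hGφ_int.const_mul c), integral_const,
      integral_const_mul, hGφ_val]
    simp only [measure_univ, probReal_univ, ENNReal.toReal_one, smul_eq_mul, one_mul, mul_one]
    rw [hc, ha]
    field_simp
    ring
  have hsub_int : Integrable (fun x => (h x - a) / a) (gmeas 0 1) :=
    (hh_int.sub (integrable_const a)).div_const a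
  set L : ℝ → ℝ := fun x => Real.log a + (h x - a) / a with hL
  have hL_int : Integrable L (gmeas 0 1) := (integrable_const _).add hsub_int
  have hL_val : ∫ x, L x ∂(gmeas 0 1) = Real.log a := by
    simp only [hL]
    rw [integral_add (integrable_const _) hsub_int,
      integral_const, integral_div, integral_sub hh_int (integrable_const a), hh_val,
      integral_const]
    simp
  have hptL : ∀ x, Real.log (h x) ≤ L x := by
    intro x
    have h1 : Real.log (h x / a) ≤ h x / a - 1 :=
      Real.log_le_sub_one_of_pos (div_pos (hhpos x) ha0)
    rw [Real.log_div (hhpos x).ne' ha0.ne'] at h1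
    have h2 : h x / a - 1 = (h x - a) / a := by field_simp
    simp only [hL]
    linarith [h1, h2.symm.le]
  have hgoal : Real.log (1 - η)⁻¹ = Real.log a := by rw [ha]
  rw [klRisk1, hgoal]
  by_cases hI : Integrable
    (fun x => ∫ y, Real.log (gpdf 0 r y / bayesPDE r (sparsePrior η ν) x y) ∂(gmeas 0 r))
    (gmeas 0 1)
  · calc ∫ x, (∫ y, Real.log (gpdf 0 r y / bayesPDE r (sparsePrior η ν) x y) ∂(gmeas 0 r))
        ∂(gmeas 0 1)
        ≤ ∫ x, L x ∂(gmeas 0 1) :=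
          integral_mono hI hL_int (fun x => (hF5 x).trans (hptL x))
      _ = Real.log a := hL_val
  · rw [integral_undef hI]
    exact hloga0

end
end

section
/- (Uniform lower bound on the numerator term for discrete priors.) Fix r > 0 and b ∈ (0,1]. There exist constants C > 0 and η₀ ∈ (0,1) (depending only on r and b) such that for all η ∈ (0, η₀), with the discrete sparse prior π_D[η; b, r] and Z ~ N(0,1): (i) for every θ ≥ λ, writing θ = λ(α_l + ω) with l ≥ 1 and ω ∈ [0, α̇_l), one has E log N_{θ,v}(Z) ≥ (λ²/2) · max( n(l,ω), ň(l,ω) ) − C; and (ii) for 0 ≤ θ < λ, E log N_{θ,v}(Z) ≥ 0. Here N_{θ,v}(z) = 1 + (η/(1−η)) ∫ exp( μz/√v + μθ/v − μ²/(2v) ) ν(dμ) with ν the normalized nonzero part of π_D[η; b, r]. -/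
open MeasureTheory ProbabilityTheory Real Filter Set

noncomputable section

/-- `K = 1 + ⌈2 b^{-3/2}⌉`. -/
def KD (b : ℝ) : ℕ := 1 + ⌈2 * b ^ (-(3 : ℝ) / 2)⌉₊

/-- Spacing sequence `α_j`: `α_j = 1 + b(j-1)` for `1 ≤ j ≤ K`, `α_j = α_K + j - K` beyond. -/
def alphaD (b : ℝ) (j : ℕ) : ℝ :=
  if j ≤ KD b then 1 + b * ((j : ℝ) - 1)
  else 1 + b * ((KD b : ℝ) - 1) + ((j : ℝ) - (KD b : ℝ))

/-- Decay sequence `β_j`: same as `α_j` with `b` replaced by `b²`. -/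
def betaD (b : ℝ) (j : ℕ) : ℝ :=
  if j ≤ KD b then 1 + b ^ 2 * ((j : ℝ) - 1)
  else 1 + b ^ 2 * ((KD b : ℝ) - 1) + ((j : ℝ) - (KD b : ℝ))

/-- Increments `α̇_j = α_{j+1} - α_j`. -/
def alphadot (b : ℝ) (j : ℕ) : ℝ := alphaD b (j + 1) - alphaD b j

/-- Normalizing constant `c(η)` of the discrete sparse prior, determined by
`1/(2c(η)) = (1-η^{b²vK})/(1-η^{b²v}) + η^{b²v(K-1)+v}/(1-η^v)`. -/
def cD (r b η : ℝ) : ℝ :=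
  (2 * ((1 - η ^ (b ^ 2 * vv r * (KD b : ℝ))) / (1 - η ^ (b ^ 2 * vv r))
      + η ^ (b ^ 2 * vv r * ((KD b : ℝ) - 1) + vv r) / (1 - η ^ vv r)))⁻¹

/-- The normalized nonzero part `ν` of the discrete sparse prior `π_D[η; b, r]`:
atoms `±μ_j = ±λ α_j` with weights `c(η) ζ^{β_j - 1}` (`ζ = η^v`), for `j ≥ 1`. -/
def nuD (r b η : ℝ) : Measure ℝ :=
  Measure.sum (fun j : ℕ =>
    ENNReal.ofReal (cD r b η * (η ^ vv r) ^ (betaD b (j + 1) - 1)) •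
      (Measure.dirac (lam r η * alphaD b (j + 1)) +
        Measure.dirac (-(lam r η * alphaD b (j + 1)))))

/-- `n(l,ω) = v⁻¹(α_l² + 2α_l ω) - β_l - r⁻¹`. -/
def nSig (r b : ℝ) (l : ℕ) (ω : ℝ) : ℝ :=
  (vv r)⁻¹ * (alphaD b l ^ 2 + 2 * alphaD b l * ω) - betaD b l - r⁻¹

/-- `ň(l,ω) = n(l,ω) + 2v⁻¹ α̇_l ω - (1 + v⁻¹) α̇_l²`. -/
def nSigCheck (r b : ℝ) (l : ℕ) (ω : ℝ) : ℝ :=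
  nSig r b l ω + 2 * (vv r)⁻¹ * alphadot b l * ω - (1 + (vv r)⁻¹) * alphadot b l ^ 2

/- ========= auxiliary lemmas ========= -/

lemma aux_vv_pos {r : ℝ} (hr : 0 < r) : 0 < vv r := div_pos hr (by linarith)

lemma aux_betaD_succ (b : ℝ) (l : ℕ) : betaD b (l+1) = betaD b l + (alphadot b l)^2 := by
  unfold betaD alphadot alphaD
  by_cases h1 : l + 1 ≤ KD b
  · have h2 : l ≤ KD b := by omega
    simp only [h1, h2, if_pos]
    push_cast; ring
  · by_cases h2 : l ≤ KD b
    · have h3 : l = KD b := by omega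
      subst h3
      simp only [h1, h2, if_neg, if_pos, if_true]
      push_cast; ring
    · simp only [h1, h2, if_neg]
      push_cast; ring

lemma aux_betaD_ge {b : ℝ} (hb0 : 0 < b) (hb1 : b ≤ 1) (j : ℕ) :
    b^2 * j ≤ betaD b (j+1) - 1 := by
  unfold betaD
  by_cases h1 : j + 1 ≤ KD b
  · simp only [h1, if_pos]; push_cast; nlinarith
  · simp only [h1, if_neg, not_false_iff]
    have hK : (KD b : ℝ) ≤ j := by
      have : KD b ≤ j := by omega
      exact_mod_cast this
    have hb2 : b^2 ≤ 1 := by nlinarith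
    push_cast
    nlinarith [sq_nonneg b]

/-- A lower bound for the normalizing constant `cD`, independent of `η ∈ (0,1/2)`. -/
def cLB (r b : ℝ) : ℝ :=
  (2 * ((1 - (2:ℝ)⁻¹ ^ (b^2 * vv r))⁻¹ + (1 - (2:ℝ)⁻¹ ^ (vv r))⁻¹))⁻¹

lemma aux_half_rpow {a : ℝ} (ha : 0 < a) : (2:ℝ)⁻¹ ^ a < 1 :=
  Real.rpow_lt_one (by norm_num) (by norm_num) ha

lemma aux_cLB_pos {r b : ℝ} (hr : 0 < r) (hb : 0 < b) : 0 < cLB r b := by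
  have hv := aux_vv_pos hr
  have ha : 0 < b^2 * vv r := by positivity
  have h1 := aux_half_rpow ha
  have h2 := aux_half_rpow hv
  have p1 : 0 < (1 - (2:ℝ)⁻¹ ^ (b^2 * vv r))⁻¹ := by
    apply inv_pos.2; linarith
  have p2 : 0 < (1 - (2:ℝ)⁻¹ ^ (vv r))⁻¹ := by
    apply inv_pos.2; linarith
  rw [cLB]; positivity

lemma aux_cLB_le_cD {r b η : ℝ} (hr : 0 < r) (hb0 : 0 < b)
    (hη : η ∈ Set.Ioo (0:ℝ) (1/2)) : cLB r b ≤ cD r b η := by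
  obtain ⟨hη0, hη2⟩ := hη
  have hη1 : η < 1 := by linarith
  have hv := aux_vv_pos hr
  have ha : 0 < b^2 * vv r := by positivity
  have hK1 : 1 ≤ (KD b : ℝ) := by
    have : 1 ≤ KD b := by unfold KD; omega
    exact_mod_cast this
  have haK : 0 < b^2 * vv r * (KD b : ℝ) := by positivity
  have he : 0 ≤ b^2 * vv r * ((KD b : ℝ) - 1) + vv r := by nlinarith
  have hda : (2:ℝ)⁻¹ ^ (b^2 * vv r) < 1 := aux_half_rpow ha
  have hdv : (2:ℝ)⁻¹ ^ (vv r) < 1 := aux_half_rpow hv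
  have hηa : η ^ (b^2 * vv r) < (2:ℝ)⁻¹ ^ (b^2 * vv r) :=
    Real.rpow_lt_rpow hη0.le (by rw [← one_div]; linarith) ha
  have hηv : η ^ (vv r) < (2:ℝ)⁻¹ ^ (vv r) :=
    Real.rpow_lt_rpow hη0.le (by rw [← one_div]; linarith) hv
  have hnum1 : η ^ (b^2 * vv r * (KD b : ℝ)) < 1 := Real.rpow_lt_one hη0.le hη1 haK
  have hnum2 : η ^ (b^2 * vv r * ((KD b : ℝ) - 1) + vv r) ≤ 1 :=
    Real.rpow_le_one hη0.le hη1.le he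
  have hnum1' : 0 ≤ η ^ (b^2 * vv r * (KD b : ℝ)) := Real.rpow_nonneg hη0.le _
  have hnum2' : 0 ≤ η ^ (b^2 * vv r * ((KD b : ℝ) - 1) + vv r) := Real.rpow_nonneg hη0.le _
  have hd1 : 0 < 1 - (2:ℝ)⁻¹ ^ (b^2 * vv r) := by linarith
  have hd2 : 0 < 1 - (2:ℝ)⁻¹ ^ (vv r) := by linarith
  have hd1' : 0 < 1 - η ^ (b^2 * vv r) := by linarith
  have hd2' : 0 < 1 - η ^ (vv r) := by linarith
  have hX1 : (1 - η ^ (b ^ 2 * vv r * (KD b : ℝ))) / (1 - η ^ (b ^ 2 * vv r))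
      ≤ (1 - (2:ℝ)⁻¹ ^ (b^2 * vv r))⁻¹ := by
    rw [← one_div]
    exact div_le_div₀ zero_le_one (by linarith) hd1 (by linarith)
  have hX2 : η ^ (b ^ 2 * vv r * ((KD b : ℝ) - 1) + vv r) / (1 - η ^ vv r)
      ≤ (1 - (2:ℝ)⁻¹ ^ (vv r))⁻¹ := by
    rw [← one_div]
    exact div_le_div₀ zero_le_one hnum2 hd2 (by linarith)
  have hX1pos : 0 < (1 - η ^ (b ^ 2 * vv r * (KD b : ℝ))) / (1 - η ^ (b ^ 2 * vv r)) :=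
    div_pos (by linarith) hd1'
  have hX2pos : 0 ≤ η ^ (b ^ 2 * vv r * ((KD b : ℝ) - 1) + vv r) / (1 - η ^ vv r) :=
    div_nonneg hnum2' hd2'.le
  rw [cLB, cD]
  apply inv_anti₀
  · nlinarith
  · nlinarith

lemma aux_cD_pos {r b η : ℝ} (hr : 0 < r) (hb0 : 0 < b)
    (hη : η ∈ Set.Ioo (0:ℝ) (1/2)) : 0 < cD r b η :=
  lt_of_lt_of_le (aux_cLB_pos hr hb0) (aux_cLB_le_cD hr hb0 hη)

lemma aux_lam_sq {r η : ℝ} (hr : 0 < r) (hη : η ∈ Set.Ioo (0:ℝ) 1) :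
    lam r η ^ 2 = 2 * vv r * (- Real.log η) := by
  have hL : 0 ≤ - Real.log η := neg_nonneg.2 (Real.log_nonpos hη.1.le hη.2.le)
  have hv := aux_vv_pos hr
  rw [lam, Real.sq_sqrt (by rw [Real.log_inv]; positivity), Real.log_inv]

lemma aux_rinv {r : ℝ} (hr : 0 < r) : r⁻¹ = (1 - vv r) / vv r := by
  rw [vv]
  have h1 : (1:ℝ) + r ≠ 0 := by linarith
  field_simp
  ring

lemma aux_ident1 {r b η : ℝ} (hr : 0 < r) (hη : η ∈ Set.Ioo (0:ℝ) 1) (l : ℕ) (ω : ℝ) :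
    Real.log η + (betaD b l - 1) * (vv r * Real.log η)
      + lam r η * alphaD b l * (lam r η * (alphaD b l + ω)) / vv r
      - (lam r η * alphaD b l) ^ 2 / (2 * vv r)
    = lam r η ^ 2 / 2 * nSig r b l ω := by
  have hv := aux_vv_pos hr
  have hΛ := aux_lam_sq hr hη
  rw [nSig, aux_rinv hr]
  have e1 : lam r η * alphaD b l * (lam r η * (alphaD b l + ω))
      = lam r η ^ 2 * (alphaD b l * (alphaD b l + ω)) := by ring
  have e2 : (lam r η * alphaD b l) ^ 2 = lam r η ^ 2 * alphaD b l ^ 2 := by ring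
  rw [e1, e2, hΛ]
  field_simp
  ring

lemma aux_ident2 {r b η : ℝ} (hr : 0 < r) (hη : η ∈ Set.Ioo (0:ℝ) 1) (l : ℕ) (ω : ℝ) :
    Real.log η + (betaD b (l+1) - 1) * (vv r * Real.log η)
      + lam r η * alphaD b (l+1) * (lam r η * (alphaD b l + ω)) / vv r
      - (lam r η * alphaD b (l+1)) ^ 2 / (2 * vv r)
    = lam r η ^ 2 / 2 * nSigCheck r b l ω := by
  have hv := aux_vv_pos hr
  have hΛ := aux_lam_sq hr hη
  have hα : alphaD b (l+1) = alphaD b l + alphadot b l := by rw [alphadot]; ring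
  rw [nSigCheck, nSig, aux_rinv hr, aux_betaD_succ, hα]
  have e1 : lam r η * (alphaD b l + alphadot b l) * (lam r η * (alphaD b l + ω))
      = lam r η ^ 2 * ((alphaD b l + alphadot b l) * (alphaD b l + ω)) := by ring
  have e2 : (lam r η * (alphaD b l + alphadot b l)) ^ 2
      = lam r η ^ 2 * (alphaD b l + alphadot b l) ^ 2 := by ring
  rw [e1, e2, hΛ]
  field_simp
  ring

lemma aux_int_gauss {f : ℝ → ℝ} (hm : StronglyMeasurable f) {c : ℝ} (hc : 0 ≤ c)
    (hf : ∀ z, |f z| ≤ c + z ^ 2) : Integrable f (gmeas 0 1) := by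
  have h1 : ((1:ℝ).toNNReal) ≠ 0 := by simp
  rw [gmeas, gaussianReal_of_var_ne_zero 0 h1]
  rw [integrable_withDensity_iff (measurable_gaussianPDF _ _)
    (ae_of_all _ fun x => ENNReal.ofReal_lt_top)]
  have hpdf : ∀ z : ℝ, (gaussianPDF 0 (1:ℝ).toNNReal z).toReal = gaussianPDFReal 0 (1:ℝ).toNNReal z :=
    fun z => ENNReal.toReal_ofReal (gaussianPDFReal_nonneg _ _ _)
  apply Integrable.mono' ((integrable_exp_neg_mul_sq (by norm_num : (0:ℝ) < 1/4)).const_mul (c + 4))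
  · exact ((hm.mul (measurable_gaussianPDFReal 0 (1:ℝ).toNNReal).stronglyMeasurable
      ).aestronglyMeasurable).congr (ae_of_all _ fun z => by simp only [Pi.mul_apply, hpdf z])
  · refine ae_of_all _ fun z => ?_
    have hnn : 0 ≤ gaussianPDFReal 0 (1:ℝ).toNNReal z := gaussianPDFReal_nonneg _ _ _
    rw [norm_mul, hpdf, Real.norm_eq_abs, Real.norm_of_nonneg hnn]
    have hpdfle : gaussianPDFReal 0 (1:ℝ).toNNReal z ≤ Real.exp (-(1/2) * z^2) := by
      rw [gaussianPDFReal]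
      have h2 : (((1:ℝ).toNNReal : ℝ)) = 1 := by simp
      rw [h2]
      have hsq : (1:ℝ) ≤ Real.sqrt (2 * π * 1) := by
        have h := Real.sq_sqrt (show (0:ℝ) ≤ 2*π*1 by positivity)
        have hnn2 := Real.sqrt_nonneg (2*π*1)
        nlinarith [Real.pi_gt_three]
      calc (Real.sqrt (2 * π * 1))⁻¹ * Real.exp (-(z - 0)^2 / (2*1))
          ≤ 1 * Real.exp (-(z-0)^2/(2*1)) :=
            mul_le_mul_of_nonneg_right (inv_le_one_of_one_le₀ hsq) (Real.exp_nonneg _)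
        _ = Real.exp (-(1/2) * z^2) := by rw [one_mul]; congr 1; ring
    have hzsq : z^2 ≤ 4 * Real.exp ((1/4) * z^2) := by
      have := Real.add_one_le_exp ((1/4) * z^2)
      nlinarith [Real.exp_nonneg ((1/4)*z^2)]
    have k1 : Real.exp (-(1/2)*z^2) ≤ Real.exp (-(1/4)*z^2) :=
      Real.exp_le_exp.2 (by nlinarith [sq_nonneg z])
    have k2 : Real.exp ((1/4)*z^2) * Real.exp (-(1/2)*z^2) = Real.exp (-(1/4)*z^2) := by
      rw [← Real.exp_add]; congr 1; ring
    calc |f z| * gaussianPDFReal 0 (1:ℝ).toNNReal z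
        ≤ (c + z^2) * Real.exp (-(1/2)*z^2) := by
          apply mul_le_mul (hf z) hpdfle hnn (by nlinarith [sq_nonneg z])
      _ ≤ (c + 4) * Real.exp (-(1/4) * z^2) := by
          nlinarith [mul_le_mul_of_nonneg_right hzsq (Real.exp_nonneg (-(1/2)*z^2)),
            mul_le_mul_of_nonneg_left k1 hc, Real.exp_nonneg (-(1/2)*z^2)]

lemma aux_int_id : Integrable (fun z : ℝ => z) (gmeas 0 1) := by
  apply aux_int_gauss stronglyMeasurable_id (by norm_num : (0:ℝ) ≤ 1)
  intro z
  simp only [id_eq]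
  nlinarith [sq_nonneg (|z| - 1), sq_abs z, abs_nonneg z]

lemma aux_integral_id : ∫ z, z ∂(gmeas 0 1) = 0 := by
  have hmap : (gmeas 0 1).map (fun z => (-1 : ℝ) * z) = gmeas 0 1 := by
    rw [gmeas, gaussianReal_map_const_mul (-1)]
    congr 1
    · ring
    · ext : 1; simp
  have h2 : ∫ z, z ∂(gmeas 0 1) = ∫ z, (-1) * z ∂(gmeas 0 1) := by
    conv_lhs => rw [← hmap]
    exact integral_map (measurable_const_mul _).aemeasurable aestronglyMeasurable_id
  simp only [neg_one_mul] at h2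
  rw [integral_neg] at h2
  linarith


lemma aux_nuD_fin {r b η : ℝ} (hr : 0 < r) (hb0 : 0 < b) (hb1 : b ≤ 1)
    (hη : η ∈ Set.Ioo (0:ℝ) (1/2)) : IsFiniteMeasure (nuD r b η) := by
  obtain ⟨hη0, hη2⟩ := hη
  have hη1 : η < 1 := by linarith
  have hv := aux_vv_pos hr
  have hcD := aux_cD_pos hr hb0 ⟨hη0, hη2⟩
  set ζ := η ^ vv r with hζdef
  have hζ0 : 0 < ζ := Real.rpow_pos_of_pos hη0 _
  have hζ1 : ζ < 1 := Real.rpow_lt_one hη0.le hη1 hv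
  set ρ := ζ ^ (b^2) with hρdef
  have hρ0 : 0 < ρ := Real.rpow_pos_of_pos hζ0 _
  have hρ1 : ρ < 1 := Real.rpow_lt_one hζ0.le hζ1 (by positivity)
  constructor
  rw [nuD, Measure.sum_apply _ MeasurableSet.univ]
  have hterm : ∀ j : ℕ,
      (ENNReal.ofReal (cD r b η * ζ ^ (betaD b (j + 1) - 1)) •
        (Measure.dirac (lam r η * alphaD b (j + 1)) +
          Measure.dirac (-(lam r η * alphaD b (j + 1))))) Set.univ
      ≤ (ENNReal.ofReal (2 * cD r b η)) * (ENNReal.ofReal ρ) ^ j := by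
    intro j
    rw [Measure.smul_apply, Measure.add_apply]
    simp only [measure_univ, smul_eq_mul]
    have hwle : cD r b η * ζ ^ (betaD b (j + 1) - 1) ≤ cD r b η * ρ ^ (j:ℕ) := by
      apply mul_le_mul_of_nonneg_left _ hcD.le
      have h1 : ζ ^ (betaD b (j + 1) - 1) ≤ ζ ^ (b^2 * (j:ℝ)) :=
        Real.rpow_le_rpow_of_exponent_ge hζ0 hζ1.le (aux_betaD_ge hb0 hb1 j)
      have h2 : ζ ^ (b^2 * (j:ℝ)) = ρ ^ (j:ℕ) := by
        rw [hρdef, ← Real.rpow_natCast (ζ ^ (b^2)) j, ← Real.rpow_mul hζ0.le]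
      rw [← h2]; exact h1
    calc ENNReal.ofReal (cD r b η * ζ ^ (betaD b (j + 1) - 1)) * (1 + 1)
        ≤ ENNReal.ofReal (cD r b η * ρ ^ (j:ℕ)) * 2 := by
          apply mul_le_mul' (ENNReal.ofReal_le_ofReal hwle)
          norm_num
      _ = ENNReal.ofReal (2 * cD r b η) * (ENNReal.ofReal ρ) ^ j := by
          rw [ENNReal.ofReal_mul hcD.le, ENNReal.ofReal_mul (by norm_num : (0:ℝ) ≤ 2),
            ENNReal.ofReal_pow hρ0.le, ENNReal.ofReal_ofNat]
          ring
  calc ∑' j, (ENNReal.ofReal (cD r b η * ζ ^ (betaD b (j + 1) - 1)) •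
        (Measure.dirac (lam r η * alphaD b (j + 1)) +
          Measure.dirac (-(lam r η * alphaD b (j + 1))))) Set.univ
      ≤ ∑' j : ℕ, (ENNReal.ofReal (2 * cD r b η)) * (ENNReal.ofReal ρ) ^ j :=
        ENNReal.tsum_le_tsum hterm
    _ = (ENNReal.ofReal (2 * cD r b η)) * ∑' j : ℕ, (ENNReal.ofReal ρ) ^ j :=
        ENNReal.tsum_mul_left
    _ = (ENNReal.ofReal (2 * cD r b η)) * (1 - ENNReal.ofReal ρ)⁻¹ := by
        rw [ENNReal.tsum_geometric]
    _ < ⊤ := by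
        apply ENNReal.mul_lt_top ENNReal.ofReal_lt_top
        rw [ENNReal.inv_lt_top]
        exact tsub_pos_of_lt (ENNReal.ofReal_lt_one.2 hρ1)

lemma aux_Nfun_ge_one {η θ v : ℝ} {ν : Measure ℝ} (hη : η ∈ Set.Ioo (0:ℝ) 1) (z : ℝ) :
    1 ≤ Nfun η ν θ v z := by
  rw [Nfun]
  have h1 : 0 ≤ η / (1 - η) := le_of_lt (div_pos hη.1 (by linarith [hη.2]))
  have h2 : 0 ≤ ∫ μ, Real.exp (μ * z / Real.sqrt v + μ * θ / v - μ ^ 2 / (2 * v)) ∂ν :=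
    integral_nonneg fun μ => (Real.exp_nonneg _)
  nlinarith

lemma aux_ElogN_nonneg {η θ v : ℝ} {ν : Measure ℝ} (hη : η ∈ Set.Ioo (0:ℝ) 1) :
    0 ≤ ElogN η ν θ v :=
  integral_nonneg fun z => Real.log_nonneg (aux_Nfun_ge_one hη z)
lemma aux_exp_bound {v θ z μ : ℝ} (hv : 0 < v) :
    Real.exp (μ * z / Real.sqrt v + μ * θ / v - μ ^ 2 / (2 * v))
      ≤ Real.exp (v * (z / Real.sqrt v + θ / v) ^ 2 / 2) := by
  apply Real.exp_le_exp.2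
  have hs : 0 < Real.sqrt v := Real.sqrt_pos.2 hv
  have h1 : μ * z / Real.sqrt v + μ * θ / v = μ * (z / Real.sqrt v + θ / v) := by
    field_simp
  rw [h1]
  have h2 : μ * (z / Real.sqrt v + θ / v) - v * (z / Real.sqrt v + θ / v) ^ 2 / 2
      ≤ μ ^ 2 / (2 * v) := by
    rw [le_div_iff₀ (by positivity)]
    nlinarith [sq_nonneg (μ - v * (z / Real.sqrt v + θ / v))]
  linarith

lemma aux_G_cont (v θ z : ℝ) :
    Continuous (fun μ : ℝ => Real.exp (μ * z / Real.sqrt v + μ * θ / v - μ ^ 2 / (2 * v))) := by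
  apply Real.continuous_exp.comp
  fun_prop

lemma aux_G_int {v θ : ℝ} (hv : 0 < v) (ν : Measure ℝ) [IsFiniteMeasure ν] (z : ℝ) :
    Integrable (fun μ => Real.exp (μ * z / Real.sqrt v + μ * θ / v - μ ^ 2 / (2 * v))) ν := by
  apply (integrable_const (Real.exp (v * (z / Real.sqrt v + θ / v) ^ 2 / 2))).mono'
    (aux_G_cont v θ z).aestronglyMeasurable
  exact ae_of_all _ fun μ => by
    rw [Real.norm_of_nonneg (Real.exp_nonneg _)]; exact aux_exp_bound hv

lemma aux_I_ub {v θ : ℝ} (hv : 0 < v) (ν : Measure ℝ) [IsFiniteMeasure ν] (z : ℝ) :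
    (∫ μ, Real.exp (μ * z / Real.sqrt v + μ * θ / v - μ ^ 2 / (2 * v)) ∂ν)
      ≤ Real.exp (v * (z / Real.sqrt v + θ / v) ^ 2 / 2) * (ν Set.univ).toReal := by
  calc (∫ μ, Real.exp (μ * z / Real.sqrt v + μ * θ / v - μ ^ 2 / (2 * v)) ∂ν)
      ≤ ∫ _, Real.exp (v * (z / Real.sqrt v + θ / v) ^ 2 / 2) ∂ν :=
        integral_mono (aux_G_int hv ν z) (integrable_const _) (fun μ => aux_exp_bound hv)
    _ = (ν Set.univ).toReal • Real.exp (v * (z / Real.sqrt v + θ / v) ^ 2 / 2) := integral_const _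
    _ = _ := by rw [smul_eq_mul]; ring

lemma aux_log_Nfun_meas {η θ v : ℝ} (ν : Measure ℝ) [SFinite ν] :
    StronglyMeasurable fun z => Real.log (Nfun η ν θ v z) := by
  have hF : Continuous (fun p : ℝ × ℝ =>
      Real.exp (p.2 * p.1 / Real.sqrt v + p.2 * θ / v - p.2 ^ 2 / (2 * v))) := by
    apply Real.continuous_exp.comp
    fun_prop
  have hIm : StronglyMeasurable fun z =>
      ∫ μ, Real.exp (μ * z / Real.sqrt v + μ * θ / v - μ ^ 2 / (2 * v)) ∂ν :=
    hF.stronglyMeasurable.integral_prod_right'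
  have hNm : Measurable fun z => Nfun η ν θ v z := by
    unfold Nfun
    exact measurable_const.add (hIm.measurable.const_mul _)
  exact (Real.measurable_log.comp hNm).stronglyMeasurable

lemma aux_log_Nfun_bound {η θ v : ℝ} (hη : η ∈ Set.Ioo (0:ℝ) 1) (hv : 0 < v)
    (ν : Measure ℝ) [IsFiniteMeasure ν] (z : ℝ) :
    |Real.log (Nfun η ν θ v z)|
      ≤ (|Real.log (1 + η / (1 - η) * (ν Set.univ).toReal)| + (θ / Real.sqrt v) ^ 2) + z ^ 2 := by
  have hs : 0 < Real.sqrt v := Real.sqrt_pos.2 hv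
  have hvs : Real.sqrt v ^ 2 = v := Real.sq_sqrt hv.le
  have hc' : 0 < η / (1 - η) := div_pos hη.1 (by linarith [hη.2])
  have hT0 : (0:ℝ) ≤ (ν Set.univ).toReal := ENNReal.toReal_nonneg
  have hge1 := aux_Nfun_ge_one (ν := ν) (θ := θ) (v := v) hη z
  rw [abs_of_nonneg (Real.log_nonneg hge1)]
  have hM1 : (1:ℝ) ≤ Real.exp (v * (z / Real.sqrt v + θ / v) ^ 2 / 2) :=
    Real.one_le_exp (by positivity)
  have hub : Nfun η ν θ v z ≤ (1 + η / (1 - η) * (ν Set.univ).toReal)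
      * Real.exp (v * (z / Real.sqrt v + θ / v) ^ 2 / 2) := by
    rw [Nfun]
    have h1 := mul_le_mul_of_nonneg_left (aux_I_ub (θ := θ) hv ν z) hc'.le
    nlinarith [mul_nonneg (mul_nonneg hc'.le hT0)
      (sub_nonneg.2 hM1)]
  have h2 := Real.log_le_log (by linarith) hub
  have h3 : Real.log ((1 + η / (1 - η) * (ν Set.univ).toReal)
        * Real.exp (v * (z / Real.sqrt v + θ / v) ^ 2 / 2))
      = Real.log (1 + η / (1 - η) * (ν Set.univ).toReal)
        + v * (z / Real.sqrt v + θ / v) ^ 2 / 2 := by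
    rw [Real.log_mul (by nlinarith) (by positivity), Real.log_exp]
  have h4 : v * (z / Real.sqrt v + θ / v) ^ 2 / 2 = (z + θ / Real.sqrt v) ^ 2 / 2 := by
    have e : z / Real.sqrt v + θ / v = (z + θ / Real.sqrt v) / Real.sqrt v := by
      rw [add_div, div_div, Real.mul_self_sqrt hv.le]
    rw [e, div_pow, hvs]
    field_simp
  have h5 : (z + θ / Real.sqrt v) ^ 2 / 2 ≤ z ^ 2 + (θ / Real.sqrt v) ^ 2 := by
    nlinarith [sq_nonneg (z - θ / Real.sqrt v)]
  have h6 : Real.log (1 + η / (1 - η) * (ν Set.univ).toReal)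
      ≤ |Real.log (1 + η / (1 - η) * (ν Set.univ).toReal)| := le_abs_self _
  linarith

lemma aux_log_Nfun_int {η θ v : ℝ} (hη : η ∈ Set.Ioo (0:ℝ) 1) (hv : 0 < v)
    (ν : Measure ℝ) [IsFiniteMeasure ν] :
    Integrable (fun z => Real.log (Nfun η ν θ v z)) (gmeas 0 1) :=
  aux_int_gauss (aux_log_Nfun_meas ν) (by positivity) (aux_log_Nfun_bound hη hv ν)

lemma aux_atom_lb {r b η : ℝ} (hr : 0 < r) (hb0 : 0 < b) (hb1 : b ≤ 1)
    (hη : η ∈ Set.Ioo (0:ℝ) (1/2)) (θ z : ℝ) (j : ℕ) :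
    cD r b η * (η ^ vv r) ^ (betaD b (j+1) - 1) *
      Real.exp ((lam r η * alphaD b (j+1)) * z / Real.sqrt (vv r)
        + (lam r η * alphaD b (j+1)) * θ / vv r - (lam r η * alphaD b (j+1)) ^ 2 / (2 * vv r))
    ≤ ∫ μ, Real.exp (μ * z / Real.sqrt (vv r) + μ * θ / vv r - μ ^ 2 / (2 * vv r)) ∂(nuD r b η) := by
  have hv := aux_vv_pos hr
  have hcD := aux_cD_pos hr hb0 hη
  have hζ0 : (0:ℝ) < η ^ vv r := Real.rpow_pos_of_pos hη.1 _
  have hw : 0 < cD r b η * (η ^ vv r) ^ (betaD b (j+1) - 1) :=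
    mul_pos hcD (Real.rpow_pos_of_pos hζ0 _)
  haveI : IsFiniteMeasure (nuD r b η) := aux_nuD_fin hr hb0 hb1 hη
  set a : ℝ := lam r η * alphaD b (j+1) with hadef
  have hint_dirac : ∀ x : ℝ,
      Integrable (fun μ => Real.exp (μ * z / Real.sqrt (vv r) + μ * θ / vv r
        - μ ^ 2 / (2 * vv r))) (Measure.dirac x) := by
    intro x
    apply (integrable_const (Real.exp (vv r * (z / Real.sqrt (vv r) + θ / vv r) ^ 2 / 2))).mono'
      (aux_G_cont (vv r) θ z).aestronglyMeasurable
    exact ae_of_all _ fun μ => by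
      rw [Real.norm_of_nonneg (Real.exp_nonneg _)]; exact aux_exp_bound hv
  have hle : (ENNReal.ofReal (cD r b η * (η ^ vv r) ^ (betaD b (j + 1) - 1)) •
      (Measure.dirac (lam r η * alphaD b (j + 1)) +
        Measure.dirac (-(lam r η * alphaD b (j + 1))))) ≤ nuD r b η := by
    rw [nuD]
    exact Measure.le_sum _ j
  have hcalc : (∫ μ, Real.exp (μ * z / Real.sqrt (vv r) + μ * θ / vv r - μ ^ 2 / (2 * vv r))
        ∂(ENNReal.ofReal (cD r b η * (η ^ vv r) ^ (betaD b (j + 1) - 1)) •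
          (Measure.dirac (lam r η * alphaD b (j + 1)) +
            Measure.dirac (-(lam r η * alphaD b (j + 1))))))
      = cD r b η * (η ^ vv r) ^ (betaD b (j+1) - 1) *
        (Real.exp (a * z / Real.sqrt (vv r) + a * θ / vv r - a ^ 2 / (2 * vv r))
          + Real.exp ((-a) * z / Real.sqrt (vv r) + (-a) * θ / vv r - (-a) ^ 2 / (2 * vv r))) := by
    rw [integral_smul_measure, integral_add_measure (hint_dirac _) (hint_dirac _),
      integral_dirac' _ _ (aux_G_cont (vv r) θ z).stronglyMeasurable,
      integral_dirac' _ _ (aux_G_cont (vv r) θ z).stronglyMeasurable,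
      ENNReal.toReal_ofReal hw.le, smul_eq_mul]
  calc cD r b η * (η ^ vv r) ^ (betaD b (j+1) - 1) *
        Real.exp (a * z / Real.sqrt (vv r) + a * θ / vv r - a ^ 2 / (2 * vv r))
      ≤ cD r b η * (η ^ vv r) ^ (betaD b (j+1) - 1) *
        (Real.exp (a * z / Real.sqrt (vv r) + a * θ / vv r - a ^ 2 / (2 * vv r))
          + Real.exp ((-a) * z / Real.sqrt (vv r) + (-a) * θ / vv r - (-a) ^ 2 / (2 * vv r))) := by
        nlinarith [Real.exp_pos ((-a) * z / Real.sqrt (vv r) + (-a) * θ / vv r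
          - (-a) ^ 2 / (2 * vv r)), hw]
    _ = _ := hcalc.symm
    _ ≤ _ := integral_mono_measure hle (ae_of_all _ fun μ => (Real.exp_pos _).le)
        (aux_G_int hv (nuD r b η) z)

lemma aux_core {r b η : ℝ} (hr : 0 < r) (hb0 : 0 < b) (hb1 : b ≤ 1)
    (hη : η ∈ Set.Ioo (0:ℝ) (1/2)) (m : ℕ) (hm : 1 ≤ m) (θ : ℝ) :
    Real.log η + (betaD b m - 1) * (vv r * Real.log η) + Real.log (cLB r b)
      + lam r η * alphaD b m * θ / vv r - (lam r η * alphaD b m) ^ 2 / (2 * vv r)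
    ≤ ElogN η (nuD r b η) θ (vv r) := by
  obtain ⟨hη0, hη2⟩ := hη
  have hη1 : η < 1 := by linarith
  have hη01 : η ∈ Set.Ioo (0:ℝ) 1 := ⟨hη0, hη1⟩
  have hv := aux_vv_pos hr
  have hs : 0 < Real.sqrt (vv r) := Real.sqrt_pos.2 hv
  have hcD := aux_cD_pos hr hb0 ⟨hη0, hη2⟩
  have hcLB := aux_cLB_pos hr hb0
  have hζ0 : (0:ℝ) < η ^ vv r := Real.rpow_pos_of_pos hη0 _
  haveI : IsFiniteMeasure (nuD r b η) := aux_nuD_fin hr hb0 hb1 ⟨hη0, hη2⟩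
  have hc' : 0 < η / (1 - η) := div_pos hη0 (by linarith)
  obtain ⟨j, hj⟩ : ∃ j : ℕ, m = j + 1 := ⟨m - 1, by omega⟩
  subst hj
  set a : ℝ := lam r η * alphaD b (j+1) with hadef
  set w : ℝ := cD r b η * (η ^ vv r) ^ (betaD b (j+1) - 1) with hwdef
  have hw : 0 < w := mul_pos hcD (Real.rpow_pos_of_pos hζ0 _)
  set A : ℝ := Real.log η - Real.log (1 - η) + Real.log (cD r b η)
      + (betaD b (j+1) - 1) * (vv r * Real.log η) + a * θ / vv r - a ^ 2 / (2 * vv r) with hAdef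
  set B : ℝ := a / Real.sqrt (vv r) with hBdef
  have hlow : ∀ z, A + B * z ≤ Real.log (Nfun η (nuD r b η) θ (vv r) z) := by
    intro z
    have h1 : η / (1 - η) * (w * Real.exp (a * z / Real.sqrt (vv r) + a * θ / vv r
        - a ^ 2 / (2 * vv r))) ≤ Nfun η (nuD r b η) θ (vv r) z := by
      rw [Nfun]
      have h2 := mul_le_mul_of_nonneg_left (aux_atom_lb hr hb0 hb1 ⟨hη0, hη2⟩ θ z j) hc'.le
      rw [hwdef, hadef]
      nlinarith [h2]
    have h2 : (0:ℝ) < η / (1 - η) * (w * Real.exp (a * z / Real.sqrt (vv r) + a * θ / vv r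
        - a ^ 2 / (2 * vv r))) := by positivity
    have h3 := Real.log_le_log h2 h1
    have h4 : Real.log (η / (1 - η) * (w * Real.exp (a * z / Real.sqrt (vv r) + a * θ / vv r
        - a ^ 2 / (2 * vv r)))) = A + B * z := by
      rw [Real.log_mul (ne_of_gt hc') (ne_of_gt (by positivity)),
        Real.log_mul (ne_of_gt hw) (ne_of_gt (Real.exp_pos _)),
        Real.log_div (ne_of_gt hη0) (by linarith),
        hwdef, Real.log_mul (ne_of_gt hcD) (ne_of_gt (Real.rpow_pos_of_pos hζ0 _)),
        Real.log_rpow hζ0, Real.log_rpow hη0, Real.log_exp, hAdef, hBdef]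
      field_simp
      ring
    rw [h4] at h3
    exact h3
  haveI : IsProbabilityMeasure (gmeas 0 1) := by rw [gmeas]; infer_instance
  have hIntLog : Integrable (fun z => Real.log (Nfun η (nuD r b η) θ (vv r) z)) (gmeas 0 1) :=
    aux_log_Nfun_int hη01 hv (nuD r b η)
  have hIntAff : Integrable (fun z => A + B * z) (gmeas 0 1) :=
    (integrable_const A).add (aux_int_id.const_mul B)
  have hmono : ∫ z, (A + B * z) ∂(gmeas 0 1) ≤ ElogN η (nuD r b η) θ (vv r) :=
    integral_mono hIntAff hIntLog hlow
  have haff : ∫ z, (A + B * z) ∂(gmeas 0 1) = A := by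
    rw [integral_add (integrable_const A) (aux_int_id.const_mul B), integral_const,
      MeasureTheory.integral_const_mul, aux_integral_id]
    simp
  have hA : Real.log η + (betaD b (j+1) - 1) * (vv r * Real.log η) + Real.log (cLB r b)
      + a * θ / vv r - a ^ 2 / (2 * vv r) ≤ A := by
    rw [hAdef]
    have h1 : Real.log (cLB r b) ≤ Real.log (cD r b η) :=
      Real.log_le_log hcLB (aux_cLB_le_cD hr hb0 ⟨hη0, hη2⟩)
    have h2 : Real.log (1 - η) ≤ 0 := Real.log_nonpos (by linarith) (by linarith)
    linarith
  calc Real.log η + (betaD b (j+1) - 1) * (vv r * Real.log η) + Real.log (cLB r b)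
      + a * θ / vv r - a ^ 2 / (2 * vv r) ≤ A := hA
    _ = ∫ z, (A + B * z) ∂(gmeas 0 1) := haff.symm
    _ ≤ ElogN η (nuD r b η) θ (vv r) := hmono

/-- Lemma 2.2 (lower bounds, numerator part): uniformly in `η` small and
`θ = λ(α_l + ω) ≥ λ`, `E log N_{θ,v}(Z) ≥ (λ²/2) max(n(l,ω), ň(l,ω)) + O(1)`,
and `E log N_{θ,v}(Z) ≥ 0` for `0 ≤ θ < λ`. -/
theorem discrete_prior_N_lower_bound (r b : ℝ) (hr : 0 < r) (hb : b ∈ Set.Ioc (0 : ℝ) 1) :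
    ∃ C > (0 : ℝ), ∃ η₀ ∈ Set.Ioo (0 : ℝ) 1, ∀ η ∈ Set.Ioo (0 : ℝ) η₀,
      (∀ l : ℕ, 1 ≤ l → ∀ ω : ℝ, 0 ≤ ω → ω < alphadot b l →
        (lam r η) ^ 2 / 2 * max (nSig r b l ω) (nSigCheck r b l ω) - C
          ≤ ElogN η (nuD r b η) (lam r η * (alphaD b l + ω)) (vv r))
      ∧ (∀ θ : ℝ, 0 ≤ θ → θ < lam r η →
          0 ≤ ElogN η (nuD r b η) θ (vv r)) := by
  obtain ⟨hb0, hb1⟩ := hb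
  refine ⟨1 + |Real.log (cLB r b)|, by positivity, 1/2, by constructor <;> norm_num, ?_⟩
  intro η hη
  have hη01 : η ∈ Set.Ioo (0:ℝ) 1 := ⟨hη.1, by linarith [hη.2]⟩
  constructor
  · intro l hl ω hω0 hω1
    have h1 := aux_core hr hb0 hb1 hη l hl (lam r η * (alphaD b l + ω))
    have h2 := aux_core hr hb0 hb1 hη (l+1) (by omega) (lam r η * (alphaD b l + ω))
    have e1 := aux_ident1 (b := b) hr hη01 l ω
    have e2 := aux_ident2 (b := b) hr hη01 l ω
    have hC : -(1 + |Real.log (cLB r b)|) ≤ Real.log (cLB r b) := by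
      have := neg_abs_le (Real.log (cLB r b)); linarith
    rcases max_cases (nSig r b l ω) (nSigCheck r b l ω) with ⟨hmx, _⟩ | ⟨hmx, _⟩ <;> rw [hmx]
    · linarith [h1, e1, hC]
    · linarith [h2, e2, hC]
  · intro θ _ _
    exact aux_ElogN_nonneg hη01

end
end

section
/- If a₁, a₂, … are positive real numbers, then for each n ≥ 1, log( 1 + Σ_{k=1}^{n+1} a_k ) < log(1 + a₁) + Σ_{k=1}^{n} a_{k+1}/a_k. -/
lemma step_lemma (S y b : ℝ) (hb : 0 < b) (hbS : b ≤ S) (hy : 0 < y) :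
    Real.log (1 + S + y) < Real.log (1 + S) + y / b := by
  have hS : 0 < 1 + S := by linarith
  have h1 : (1 + S + y) = (1 + S) * (1 + y / (1 + S)) := by
    field_simp
  rw [h1, Real.log_mul (by positivity) (by positivity)]
  have h2 : Real.log (1 + y / (1 + S)) < y / (1 + S) := by
    have ht : 0 < y / (1 + S) := by positivity
    have := Real.add_one_lt_exp (ne_of_gt ht)
    calc Real.log (1 + y / (1 + S)) < Real.log (Real.exp (y / (1 + S))) := by
          apply Real.log_lt_log (by positivity); linarith
      _ = y / (1 + S) := Real.log_exp _
  have h3 : y / (1 + S) ≤ y / b := by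
    apply div_le_div_of_nonneg_left hy.le hb; linarith
  linarith

/-- Lemma A.1: if `a₁, a₂, …` are positive then for each `n ≥ 1`,
`log(1 + Σ_{k=1}^{n+1} a_k) < log(1+a₁) + Σ_{k=1}^n a_{k+1}/a_k`. -/
theorem log_one_add_sum_lt (a : ℕ → ℝ) (ha : ∀ k, 1 ≤ k → 0 < a k)
    (n : ℕ) (hn : 1 ≤ n) :
    Real.log (1 + ∑ k ∈ Finset.Icc 1 (n + 1), a k)
      < Real.log (1 + a 1) + ∑ k ∈ Finset.Icc 1 n, a (k + 1) / a k := by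
  induction n with
  | zero => omega
  | succ m ih =>
    rcases Nat.eq_or_lt_of_le hn with h | h
    · -- m = 0, n = 1
      have hm : m = 0 := by omega
      subst hm
      simp only [Finset.Icc_self, Finset.sum_singleton]
      rw [show (1:ℕ)+1 = 2 from rfl, show Finset.Icc 1 2 = {1, 2} from rfl]
      rw [Finset.sum_insert (by decide), Finset.sum_singleton]
      have := step_lemma (a 1) (a 2) (a 1) (ha 1 le_rfl) le_rfl (ha 2 (by omega))
      rw [← add_assoc]
      linarith [this]
    · have hm : 1 ≤ m := by omega
      have ih' := ih hm
      have hL : ∑ k ∈ Finset.Icc 1 (m + 1 + 1), a k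
          = (∑ k ∈ Finset.Icc 1 (m + 1), a k) + a (m + 1 + 1) :=
        Finset.sum_Icc_succ_top (by omega) _
      have hR : ∑ k ∈ Finset.Icc 1 (m + 1), a (k + 1) / a k
          = (∑ k ∈ Finset.Icc 1 m, a (k + 1) / a k) + a (m + 1 + 1) / a (m + 1) :=
        Finset.sum_Icc_succ_top (by omega) _
      rw [hL, hR, ← add_assoc]
      set S := ∑ k ∈ Finset.Icc 1 (m + 1), a k with hSdef
      have hbS : a (m + 1) ≤ S := by
        apply Finset.single_le_sum (f := a) (fun i hi => (ha i (Finset.mem_Icc.mp hi).1).le)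
        simp [Finset.mem_Icc]
      have key := step_lemma S (a (m + 1 + 1)) (a (m + 1)) (ha (m+1) (by omega)) hbS
        (ha (m+1+1) (by omega))
      linarith
end

section
/- Let r > 0, v = r/(1+r), η ∈ (0, 1/2], l > 0 and θ ∈ ℝ with θ l / v ≥ 1. Let Z ~ N(0,1) and define N^S_{θ,v}(z) = 1 + (η/(1−η)) · (1/(2l)) ∫_{−l}^{l} exp( μz/√v + μθ/v − μ²/(2v) ) dμ, the numerator functional associated with the spike-and-slab prior π_S[η,l]. Then E log N^S_{θ,v}(Z) ≤ θ l / v. -/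
open MeasureTheory ProbabilityTheory Real Filter Set
open scoped ENNReal NNReal

noncomputable section

/-- Numerator functional of the spike-and-slab prior `π_S[η,l]`:
`N^S_{θ,v}(z) = 1 + (η/(1-η))(1/(2l)) ∫_{-l}^{l} exp(μz/√v + μθ/v - μ²/(2v)) dμ`. -/
def NS (η l θ v z : ℝ) : ℝ :=
  1 + η / (1 - η) *
    ((2 * l)⁻¹ * ∫ μ in (-l)..l, Real.exp (μ * z / Real.sqrt v + μ * θ / v - μ ^ 2 / (2 * v)))

lemma my_pdf_mul (c z : ℝ) :
    gaussianPDFReal 0 1 z * rexp (c * z) = rexp (c ^ 2 / 2) * gaussianPDFReal c 1 z := by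
  simp only [gaussianPDFReal, NNReal.coe_one, mul_one, sub_zero]
  rw [mul_assoc, ← Real.exp_add, show rexp (c ^ 2 / 2) * ((√(2 * π))⁻¹ * rexp (-(z - c) ^ 2 / 2))
    = (√(2 * π))⁻¹ * rexp (c ^ 2 / 2 + -(z - c) ^ 2 / 2) by rw [mul_left_comm, ← Real.exp_add]]
  congr 1
  ring

lemma my_gauss_eq (m : ℝ) (g : ℝ → ℝ) :
    ∫ z, g z ∂(gaussianReal m 1) = ∫ z, gaussianPDFReal m 1 z * g z := by
  rw [gaussianReal_of_var_ne_zero m one_ne_zero,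
    show gaussianPDF m 1 = fun z => ((gaussianPDFReal m 1 z).toNNReal : ℝ≥0∞) from rfl,
    integral_withDensity_eq_integral_smul ((measurable_gaussianPDFReal m 1).real_toNNReal) g]
  congr 1
  ext z
  rw [NNReal.smul_def, Real.coe_toNNReal _ (gaussianPDFReal_nonneg m 1 z), smul_eq_mul]

lemma my_integrable_exp_gauss (c : ℝ) :
    Integrable (fun z => rexp (c * z)) (gaussianReal 0 1) := by
  rw [gaussianReal_of_var_ne_zero 0 one_ne_zero,
    show gaussianPDF 0 1 = fun z => ((gaussianPDFReal 0 1 z).toNNReal : ℝ≥0∞) from rfl,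
    integrable_withDensity_iff_integrable_smul ((measurable_gaussianPDFReal 0 1).real_toNNReal)]
  have : (fun z => (gaussianPDFReal 0 1 z).toNNReal • rexp (c * z))
      = fun z => rexp (c ^ 2 / 2) * gaussianPDFReal c 1 z := by
    ext z
    rw [NNReal.smul_def, smul_eq_mul, Real.coe_toNNReal _ (gaussianPDFReal_nonneg 0 1 z),
      my_pdf_mul]
  exact this ▸ (integrable_gaussianPDFReal c 1).const_mul _

lemma my_integral_exp_gauss (c : ℝ) :
    ∫ z, rexp (c * z) ∂(gaussianReal 0 1) = rexp (c ^ 2 / 2) := by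
  rw [my_gauss_eq]
  simp_rw [my_pdf_mul]
  rw [integral_const_mul, integral_gaussianPDFReal_eq_one c one_ne_zero, mul_one]

set_option maxHeartbeats 1000000 in
/-- Lemma 3.1: if `η ≤ 1/2` and `θl/v ≥ 1` then `E log N^S_{θ,v}(Z) ≤ θl/v`. -/
theorem spike_slab_N_expectation_bound (r η l θ : ℝ) (hr : 0 < r)
    (hη0 : 0 < η) (hη : η ≤ 1 / 2) (hl : 0 < l) (hθ : 1 ≤ θ * l / vv r) :
    ∫ z, Real.log (NS η l θ (vv r) z) ∂(gmeas 0 1) ≤ θ * l / vv r := by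
  have hgm : gmeas 0 1 = gaussianReal 0 1 := by
    unfold gmeas
    rw [Real.toNNReal_one]
  rw [hgm]
  set v : ℝ := vv r with hvdef
  have hv : 0 < v := by rw [hvdef, vv]; exact div_pos hr (by linarith)
  have hvne : v ≠ 0 := hv.ne'
  have hv1 : v ≤ 1 := by rw [hvdef, vv, div_le_one (by linarith)]; linarith
  have hsv0 : 0 < Real.sqrt v := Real.sqrt_pos.mpr hv
  have hsq : Real.sqrt v ^ 2 = v := Real.sq_sqrt hv.le
  have hθ0 : 0 < θ := by
    by_contra h
    push_neg at h
    have h1 : θ * l ≤ 0 := mul_nonpos_of_nonpos_of_nonneg h hl.le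
    have h2 : θ * l / v ≤ 0 := div_nonpos_of_nonpos_of_nonneg h1 hv.le
    linarith
  set b : ℝ := θ / v with hb
  have hb0 : 0 < b := div_pos hθ0 hv
  have hab : θ * l / v = l * b := by rw [hb]; ring
  set c : ℝ := η / (1 - η) with hcdef
  have hη1 : (0:ℝ) < 1 - η := by linarith
  have hc0 : 0 < c := div_pos hη0 hη1
  have hc1 : c ≤ 1 := by rw [hcdef, div_le_one hη1]; linarith
  set γ : Measure ℝ := gaussianReal 0 1 with hγ
  haveI : IsProbabilityMeasure γ := by rw [hγ]; infer_instance
  set K : Set ℝ := Set.Ioc (-l) l with hK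
  haveI : IsFiniteMeasure (volume.restrict K) := by
    constructor
    rw [Measure.restrict_apply_univ, hK, Real.volume_Ioc]
    exact ENNReal.ofReal_lt_top
  set F : ℝ → ℝ → ℝ :=
    fun z μ => rexp (μ * z / Real.sqrt v + μ * θ / v - μ ^ 2 / (2 * v)) with hF
  have hFc : Continuous (Function.uncurry F) := by
    rw [hF]
    unfold Function.uncurry
    fun_prop
  -- NS as set integral
  have hNS : NS η l θ v = fun z => 1 + c * ((2*l)⁻¹ * ∫ μ in K, F z μ) := by
    funext z
    rw [NS, intervalIntegral.integral_of_le (by linarith : -l ≤ l)]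
  have hN1 : ∀ z, 1 ≤ NS η l θ v z := by
    intro z
    rw [hNS]
    have h0 : 0 ≤ ∫ μ in K, F z μ :=
      integral_nonneg fun μ => (Real.exp_pos _).le
    have : 0 ≤ c * ((2*l)⁻¹ * ∫ μ in K, F z μ) :=
      mul_nonneg hc0.le (mul_nonneg (by positivity) h0)
    linarith
  -- measurability
  have hGsm : StronglyMeasurable (fun z => ∫ μ in K, F z μ) :=
    hFc.stronglyMeasurable.integral_prod_right'
  have hNsm : StronglyMeasurable (NS η l θ v) := by
    rw [hNS]
    exact stronglyMeasurable_const.add ((hGsm.const_mul _).const_mul _)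
  -- integrability on the product
  have hgint : Integrable
      (fun z : ℝ => rexp (θ * l / v) * (rexp ((l / Real.sqrt v) * z)
        + rexp ((-(l / Real.sqrt v)) * z))) γ :=
    (((my_integrable_exp_gauss (l / Real.sqrt v)).add
      (my_integrable_exp_gauss (-(l / Real.sqrt v)))).const_mul _)
  have hgprod : Integrable (fun p : ℝ × ℝ =>
      (rexp (θ * l / v) * (rexp ((l / Real.sqrt v) * p.1)
        + rexp ((-(l / Real.sqrt v)) * p.1))) * 1) (γ.prod (volume.restrict K)) :=
    hgint.mul_prod (integrable_const 1)
  have hK2 : ∀ᵐ p : ℝ × ℝ ∂(γ.prod (volume.restrict K)), p.2 ∈ K := by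
    rw [ae_iff]
    have hset : {p : ℝ × ℝ | ¬ p.2 ∈ K} = (Set.univ : Set ℝ) ×ˢ Kᶜ := by
      ext p; simp
    rw [hset, Measure.prod_prod, Measure.restrict_apply measurableSet_Ioc.compl,
      Set.compl_inter_self, measure_empty, mul_zero]
  have hbound : ∀ᵐ p : ℝ × ℝ ∂(γ.prod (volume.restrict K)),
      ‖Function.uncurry F p‖ ≤ (rexp (θ * l / v) * (rexp ((l / Real.sqrt v) * p.1)
        + rexp ((-(l / Real.sqrt v)) * p.1))) * 1 := by
    filter_upwards [hK2] with p hp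
    obtain ⟨z, μ⟩ := p
    simp only [Function.uncurry, hF, mul_one]
    have hμl : -l < μ := hp.1
    have hμr : μ ≤ l := hp.2
    rw [Real.norm_eq_abs, abs_of_pos (Real.exp_pos _)]
    have e1 : μ * θ / v ≤ θ * l / v := by
      rw [div_le_div_iff₀ hv hv]
      nlinarith [mul_le_mul_of_nonneg_right (mul_le_mul_of_nonneg_right hμr hθ0.le) hv.le]
    have e2 : μ * z / Real.sqrt v ≤ |z| * (l / Real.sqrt v) := by
      calc μ * z / Real.sqrt v ≤ |μ * z| / Real.sqrt v := by
            gcongr; exact le_abs_self _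
        _ = |μ| * |z| / Real.sqrt v := by rw [abs_mul]
        _ ≤ l * |z| / Real.sqrt v := by
            gcongr
            exact abs_le.mpr ⟨hμl.le, hμr⟩
        _ = |z| * (l / Real.sqrt v) := by ring
    have e3 : (0:ℝ) ≤ μ ^ 2 / (2 * v) := by positivity
    have h1 : μ * z / Real.sqrt v + μ * θ / v - μ ^ 2 / (2 * v)
        ≤ |z| * (l / Real.sqrt v) + θ * l / v := by linarith
    have h2 : rexp (|z| * (l / Real.sqrt v))
        ≤ rexp ((l / Real.sqrt v) * z) + rexp ((-(l / Real.sqrt v)) * z) := by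
      rcases abs_cases z with ⟨hz, _⟩ | ⟨hz, _⟩
      · rw [hz, mul_comm]
        exact le_add_of_nonneg_right (Real.exp_pos _).le
      · rw [hz, show -z * (l / Real.sqrt v) = (-(l / Real.sqrt v)) * z by ring]
        exact le_add_of_nonneg_left (Real.exp_pos _).le
    calc rexp (μ * z / Real.sqrt v + μ * θ / v - μ ^ 2 / (2 * v))
        ≤ rexp (|z| * (l / Real.sqrt v) + θ * l / v) := Real.exp_le_exp.mpr h1
      _ = rexp (θ * l / v) * rexp (|z| * (l / Real.sqrt v)) := by
          rw [← Real.exp_add]; ring_nf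
      _ ≤ rexp (θ * l / v) * (rexp ((l / Real.sqrt v) * z)
            + rexp ((-(l / Real.sqrt v)) * z)) :=
          mul_le_mul_of_nonneg_left h2 (Real.exp_pos _).le
  have hFint : Integrable (Function.uncurry F) (γ.prod (volume.restrict K)) :=
    Integrable.mono' hgprod hFc.aestronglyMeasurable hbound
  have hGint : Integrable (fun z => ∫ μ in K, F z μ) γ := hFint.integral_prod_left
  have hNint : Integrable (NS η l θ v) γ := by
    rw [hNS]
    exact (integrable_const 1).add ((hGint.const_mul _).const_mul _)
  -- value of the integral of NS
  have hinner : ∀ μ : ℝ, ∫ z, F z μ ∂γ = rexp (μ * b) := by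
    intro μ
    have hrw : (fun z => F z μ)
        = fun z => rexp (μ * θ / v - μ ^ 2 / (2 * v)) * rexp ((μ / Real.sqrt v) * z) := by
      funext z
      simp only [hF]
      rw [← Real.exp_add]
      congr 1
      ring
    rw [hrw, integral_const_mul, hγ, my_integral_exp_gauss, ← Real.exp_add]
    congr 1
    rw [div_pow, hsq, hb]
    ring
  have hJ : ∫ μ in K, rexp (μ * b) = b⁻¹ * (rexp (θ * l / v) - rexp (-(θ * l / v))) := by
    rw [hK, ← intervalIntegral.integral_of_le (by linarith : -l ≤ l),
      intervalIntegral.integral_comp_mul_right rexp hb0.ne', integral_exp, smul_eq_mul,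
      hab, neg_mul]
  have hswap : ∫ z, (∫ μ in K, F z μ) ∂γ = ∫ μ in K, (∫ z, F z μ ∂γ) :=
    integral_integral_swap hFint
  have hNval : ∫ z, NS η l θ v z ∂γ
      = 1 + c * ((2*l)⁻¹ * (b⁻¹ * (rexp (θ * l / v) - rexp (-(θ * l / v))))) := by
    rw [hNS]
    rw [integral_add (integrable_const 1) ((hGint.const_mul _).const_mul _),
      integral_const, probReal_univ, one_smul, integral_const_mul,
      integral_const_mul, hswap]
    simp_rw [hinner]
    rw [hJ]
  -- numeric bound : ∫ N ≤ exp (θ l / v)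
  have hnum : 0 ≤ rexp (θ * l / v) - rexp (-(θ * l / v)) := by
    have := Real.exp_le_exp.mpr (by linarith : -(θ * l / v) ≤ θ * l / v)
    linarith
  have hEbound : 1 + c * ((2*l)⁻¹ * (b⁻¹ * (rexp (θ * l / v) - rexp (-(θ * l / v)))))
      ≤ rexp (θ * l / v) := by
    have hlb1 : 1 ≤ l * b := by rw [← hab]; exact hθ
    have h1 : (2*l)⁻¹ * (b⁻¹ * (rexp (θ * l / v) - rexp (-(θ * l / v))))
        = (rexp (θ * l / v) - rexp (-(θ * l / v))) / (2 * (l * b)) := by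
      ring
    rw [h1]
    have hD0 : 0 ≤ (rexp (θ * l / v) - rexp (-(θ * l / v))) / (2 * (l * b)) :=
      div_nonneg hnum (by linarith)
    have hd : (rexp (θ * l / v) - rexp (-(θ * l / v))) / (2 * (l * b))
        ≤ (rexp (θ * l / v) - rexp (-(θ * l / v))) / 2 := by
      gcongr
      linarith
    have hmul : rexp (θ * l / v) * rexp (-(θ * l / v)) = 1 := by
      rw [← Real.exp_add]; simp
    have hcd : c * ((rexp (θ * l / v) - rexp (-(θ * l / v))) / (2 * (l * b)))
        ≤ (rexp (θ * l / v) - rexp (-(θ * l / v))) / 2 :=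
      le_trans (by nlinarith) hd
    have hfin : (rexp (θ * l / v) - rexp (-(θ * l / v))) / 2 ≤ rexp (θ * l / v) - 1 := by
      nlinarith [sq_nonneg (rexp (θ * l / v) - 1), Real.exp_pos (-(θ * l / v)),
        Real.exp_pos (θ * l / v)]
    linarith
  -- log N integrable
  have hNpos : ∀ z, (0:ℝ) < NS η l θ v z := fun z => lt_of_lt_of_le one_pos (hN1 z)
  have hlog_int : Integrable (fun z => Real.log (NS η l θ v z)) γ := by
    apply Integrable.mono' hNint
      ((Real.measurable_log.comp hNsm.measurable).aestronglyMeasurable)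
    refine ae_of_all _ fun z => ?_
    simp only [Function.comp_apply]
    rw [Real.norm_eq_abs, abs_of_nonneg (Real.log_nonneg (hN1 z))]
    have := Real.log_le_sub_one_of_pos (hNpos z)
    linarith
  -- Jensen
  have hconc : ConcaveOn ℝ (Set.Ici (1:ℝ)) Real.log :=
    strictConcaveOn_log_Ioi.concaveOn.subset
      (fun x hx => show (0:ℝ) < x from lt_of_lt_of_le one_pos hx) (convex_Ici 1)
  have hcont : ContinuousOn Real.log (Set.Ici (1:ℝ)) :=
    Real.continuousOn_log.mono fun x hx =>
      Set.mem_compl_singleton_iff.mpr (ne_of_gt (lt_of_lt_of_le one_pos hx))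
  have hjen : ∫ z, Real.log (NS η l θ v z) ∂γ ≤ Real.log (∫ z, NS η l θ v z ∂γ) :=
    hconc.le_map_integral hcont isClosed_Ici (ae_of_all _ fun z => hN1 z) hNint hlog_int
  have hIpos : 0 < ∫ z, NS η l θ v z ∂γ := by
    rw [hNval]
    have : 0 ≤ c * ((2*l)⁻¹ * (b⁻¹ * (rexp (θ * l / v) - rexp (-(θ * l / v))))) := by
      apply mul_nonneg hc0.le
      apply mul_nonneg (by positivity)
      exact mul_nonneg (by positivity) hnum
    linarith
  calc ∫ z, Real.log (NS η l θ v z) ∂γ ≤ Real.log (∫ z, NS η l θ v z ∂γ) := hjen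
    _ ≤ Real.log (rexp (θ * l / v)) := by
        apply Real.log_le_log hIpos
        rw [hNval]
        exact hEbound
    _ = θ * l / v := Real.log_exp _


end
end

section
/- Let Φ denote the standard normal CDF and φ the standard normal density, and let Z ~ N(0,1). For v ∈ (0,1], l ≥ 1 and |θ| ≤ l, define Φ_{l,v} = Φ( v^{−1/2}(l−θ) − Z ) − Φ( v^{−1/2}(−l−θ) − Z ). Then, uniformly in such v, l, θ, E log Φ_{l,v} ≥ log φ(0) − 2/3 = −(1/2) log(2π) − 2/3. -/
open MeasureTheory ProbabilityTheory Real Filter Set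

noncomputable section

/-- Standard normal CDF `Φ`. -/
def stdCDF (z : ℝ) : ℝ := (gaussianReal 0 1 (Set.Iic z)).toReal

namespace GWLBAux

open scoped Topology ENNReal NNReal

/-- standard normal density -/
def phi0 (x : ℝ) : ℝ := (Real.sqrt (2 * π))⁻¹ * Real.exp (-(1/2) * x ^ 2)

lemma phi0_pos (x : ℝ) : 0 < phi0 x := by unfold phi0; positivity

lemma phi0_continuous : Continuous phi0 := by unfold phi0; fun_prop

lemma pdf_eq : gaussianPDFReal 0 1 = phi0 := by
  funext x
  rw [gaussianPDFReal, phi0]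
  simp only [NNReal.coe_one, mul_one, sub_zero]
  congr 1
  rw [Real.exp_eq_exp]
  ring

lemma gmeas01 : gmeas 0 1 = volume.withDensity (fun x => ((phi0 x).toNNReal : ℝ≥0∞)) := by
  rw [gmeas, Real.toNNReal_one, gaussianReal_of_var_ne_zero _ one_ne_zero]
  congr 1
  funext x
  rw [gaussianPDF, pdf_eq]
  rfl

lemma integral_gmeas (f : ℝ → ℝ) :
    ∫ z, f z ∂(gmeas 0 1) = ∫ z, phi0 z * f z := by
  rw [gmeas01, integral_withDensity_eq_integral_smul
    (phi0_continuous.measurable.real_toNNReal)]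
  congr 1
  funext z
  simp [NNReal.smul_def, Real.coe_toNNReal _ (phi0_pos z).le]

lemma integrable_gmeas_iff (f : ℝ → ℝ) :
    Integrable f (gmeas 0 1) ↔ Integrable (fun z => phi0 z * f z) := by
  rw [gmeas01, integrable_withDensity_iff_integrable_smul
    (phi0_continuous.measurable.real_toNNReal)]
  refine integrable_congr (ae_of_all _ fun z => ?_)
  simp [NNReal.smul_def, Real.coe_toNNReal _ (phi0_pos z).le]

lemma I1 : Integrable phi0 := by
  unfold phi0
  exact (integrable_exp_neg_mul_sq (by norm_num : (0:ℝ) < 1/2)).const_mul _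

lemma I2 : Integrable (fun z => phi0 z * z) := by
  have h := (integrable_mul_exp_neg_mul_sq (by norm_num : (0:ℝ) < 1/2)).const_mul
    (Real.sqrt (2 * π))⁻¹
  refine h.congr (ae_of_all _ fun z => ?_)
  unfold phi0; ring

lemma I3 : Integrable (fun z => phi0 z * z ^ 2) := by
  have h := (integrable_rpow_mul_exp_neg_mul_sq (by norm_num : (0:ℝ) < 1/2)
    (by norm_num : (-1:ℝ) < 2)).const_mul (Real.sqrt (2 * π))⁻¹
  refine h.congr (ae_of_all _ fun z => ?_)
  have h2 : z ^ (2:ℝ) = z ^ 2 := by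
    rw [show (2:ℝ) = ((2:ℕ):ℝ) by norm_num, Real.rpow_natCast]
  simp only [h2]
  unfold phi0; ring

lemma C1 : ∫ z, phi0 z = 1 := by
  rw [← pdf_eq]
  exact integral_gaussianPDFReal_eq_one 0 one_ne_zero

/-- the antiderivative of `x ↦ phi0 x * x` -/
def V (y : ℝ) : ℝ := -((Real.sqrt (2 * π))⁻¹ * Real.exp (-(1/2) * y ^ 2))

lemma V_deriv (x : ℝ) : HasDerivAt V (phi0 x * x) x := by
  have h1 : HasDerivAt (fun y : ℝ => -(1/2) * y ^ 2) (-(1/2) * (2 * x)) x := by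
    simpa using ((hasDerivAt_pow 2 x).const_mul (-(1/2) : ℝ))
  have h2 := ((h1.exp).const_mul ((Real.sqrt (2 * π))⁻¹ : ℝ)).neg
  convert h2 using 1
  · rfl
  · rfl
  · rfl
  unfold phi0; ring

lemma V_tendsto {F : Filter ℝ} (h : Tendsto (fun y : ℝ => y ^ 2) F atTop) :
    Tendsto V F (𝓝 0) := by
  have h1 : Tendsto (fun y : ℝ => -(1/2) * y ^ 2) F atBot := by
    have h2 := h.const_mul_atTop (show (0:ℝ) < 1/2 by norm_num)
    have h3 := tendsto_neg_atTop_atBot.comp h2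
    refine h3.congr fun y => ?_
    simp only [Function.comp_apply]; ring
  have h4 := Real.tendsto_exp_atBot.comp h1
  have h5 := (h4.const_mul ((Real.sqrt (2 * π))⁻¹ : ℝ)).neg
  have h0 : -((Real.sqrt (2 * π))⁻¹ * (0:ℝ)) = 0 := by ring
  rw [← h0]
  exact h5

lemma sq_tendsto_atTop : Tendsto (fun y : ℝ => y ^ 2) atTop atTop :=
  tendsto_pow_atTop two_ne_zero

lemma sq_tendsto_atBot : Tendsto (fun y : ℝ => y ^ 2) atBot atTop := by
  have h := sq_tendsto_atTop.comp tendsto_neg_atBot_atTop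
  refine h.congr fun y => ?_
  simp only [Function.comp_apply]; ring

lemma C2 : ∫ z, phi0 z * z = 0 := by
  have h := integral_of_hasDerivAt_of_tendsto V_deriv I2
    (V_tendsto sq_tendsto_atBot) (V_tendsto sq_tendsto_atTop)
  simpa using h

lemma C3 : ∫ z, phi0 z * z ^ 2 = 1 := by
  have h := integral_mul_deriv_eq_deriv_mul_of_integrable
    (u := fun x : ℝ => x) (u' := fun _ : ℝ => (1:ℝ)) (v := V)
    (v' := fun x => phi0 x * x)
    (fun x _ => hasDerivAt_id x) (fun x _ => V_deriv x)
    (I3.congr (ae_of_all _ fun z => by simp only [Pi.mul_apply]; ring))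
    ((I1.neg.congr (ae_of_all _ fun z => by
        simp only [Pi.mul_apply, Pi.neg_apply, V, phi0]; ring)))
    (I2.neg.congr (ae_of_all _ fun z => by
        simp only [Pi.mul_apply, Pi.neg_apply, V, phi0]; ring))
  have h2 : ∫ x, x * (phi0 x * x) = ∫ x, phi0 x * x ^ 2 := by
    congr 1; funext x; ring
  have h3 : ∫ x, (1:ℝ) * V x = -∫ x, phi0 x := by
    rw [← integral_neg]
    congr 1; funext x
    simp only [V]; unfold phi0; ring
  rw [h2] at h
  rw [h, h3, C1]
  norm_num

lemma stdCDF_sub_eq {a b : ℝ} (hab : a ≤ b) :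
    stdCDF b - stdCDF a = ∫ x in Ioc a b, phi0 x := by
  have h1 : gaussianReal 0 1 (Iic b) = gaussianReal 0 1 (Iic a) + gaussianReal 0 1 (Ioc a b) := by
    rw [← measure_union (Iic_disjoint_Ioc le_rfl) measurableSet_Ioc, Iic_union_Ioc_eq_Iic hab]
  have hint : 0 ≤ ∫ x in Ioc a b, gaussianPDFReal 0 1 x :=
    integral_nonneg fun x => gaussianPDFReal_nonneg _ _ _
  have h2 : ((gaussianReal 0 1) (Ioc a b)).toReal = ∫ x in Ioc a b, phi0 x := by
    rw [gaussianReal_apply_eq_integral 0 one_ne_zero, ENNReal.toReal_ofReal hint, pdf_eq]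
  rw [stdCDF, stdCDF, h1, ENNReal.toReal_add (measure_ne_top _ _) (measure_ne_top _ _), h2]
  ring

lemma stdCDF_mono : Monotone stdCDF := by
  intro a b hab
  have h := stdCDF_sub_eq hab
  have h2 : 0 ≤ ∫ x in Ioc a b, phi0 x :=
    setIntegral_nonneg measurableSet_Ioc fun x _ => (phi0_pos x).le
  linarith

lemma stdCDF_nonneg (x : ℝ) : 0 ≤ stdCDF x := ENNReal.toReal_nonneg

lemma stdCDF_le_one (x : ℝ) : stdCDF x ≤ 1 := by
  rw [stdCDF]
  have h : gaussianReal 0 1 (Iic x) ≤ 1 := prob_le_one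
  have := ENNReal.toReal_mono ENNReal.one_ne_top h
  simpa using this

lemma log_phi0 (x : ℝ) :
    Real.log (phi0 x) = -(1/2) * Real.log (2 * π) - (1/2) * x ^ 2 := by
  rw [phi0, Real.log_mul (by positivity) (Real.exp_ne_zero _), Real.log_inv,
    Real.log_sqrt (by positivity), Real.log_exp]
  ring

lemma int_log_phi0 (u : ℝ) : ∫ x in Ioc u (u + 1), Real.log (phi0 x) =
    -(1/2) * Real.log (2 * π) - (1/2) * (u ^ 2 + u + 1/3) := by
  simp_rw [log_phi0]
  rw [← intervalIntegral.integral_of_le (by linarith : u ≤ u + 1),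
    intervalIntegral.integral_sub (g := fun x : ℝ => 1/2 * x ^ 2) (intervalIntegrable_const)
      (((continuous_const.mul (continuous_pow 2)).intervalIntegrable _ _)),
    intervalIntegral.integral_const, intervalIntegral.integral_const_mul, integral_pow]
  simp only [smul_eq_mul]
  ring

lemma int_phi0_lb (u : ℝ) :
    (Real.sqrt (2 * π))⁻¹ * Real.exp (-(1/2) * (|u| + 1) ^ 2) ≤
      ∫ s in Ioc u (u + 1), phi0 s := by
  set m : ℝ := (Real.sqrt (2 * π))⁻¹ * Real.exp (-(1/2) * (|u| + 1) ^ 2) with hm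
  have hvol : volume (Ioc u (u + 1)) = 1 := by
    rw [Real.volume_Ioc]; norm_num
  have hbound : ∀ x ∈ Ioc u (u + 1), m ≤ phi0 x := by
    intro x hx
    have hx1 : x ≤ |u| + 1 := le_trans hx.2 (by linarith [le_abs_self u])
    have hx2 : -(|u| + 1) ≤ x := le_trans (by linarith [neg_abs_le u]) hx.1.le
    have hsq : x ^ 2 ≤ (|u| + 1) ^ 2 := by nlinarith
    rw [hm, phi0]
    have := Real.exp_le_exp.mpr (show -(1/2) * (|u| + 1) ^ 2 ≤ -(1/2) * x ^ 2 by linarith)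
    have h0 : (0:ℝ) ≤ (Real.sqrt (2 * π))⁻¹ := by positivity
    exact mul_le_mul_of_nonneg_left this h0
  calc m = (volume (Ioc u (u + 1))).toReal • m := by rw [hvol]; simp
  _ = ∫ _ in Ioc u (u + 1), m := (setIntegral_const m).symm
  _ ≤ ∫ s in Ioc u (u + 1), phi0 s := by
      refine setIntegral_mono_on ?_ I1.integrableOn measurableSet_Ioc hbound
      refine (integrableOn_const_iff).mpr (Or.inr ?_)
      rw [hvol]; exact ENNReal.one_lt_top

lemma int_phi0_pos (u : ℝ) : 0 < ∫ s in Ioc u (u + 1), phi0 s :=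
  lt_of_lt_of_le (by positivity) (int_phi0_lb u)

lemma key (u : ℝ) :
    -(1/2) * Real.log (2 * π) - (1/2) * (u ^ 2 + u + 1/3) ≤
      Real.log (∫ s in Ioc u (u + 1), phi0 s) := by
  have hvol : volume (Ioc u (u + 1)) = 1 := by
    rw [Real.volume_Ioc]; norm_num
  have hprob : IsProbabilityMeasure (volume.restrict (Ioc u (u + 1))) :=
    ⟨by rw [Measure.restrict_apply_univ]; exact hvol⟩
  set m : ℝ := (Real.sqrt (2 * π))⁻¹ * Real.exp (-(1/2) * (|u| + 1) ^ 2) with hm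
  have hmpos : 0 < m := by positivity
  have hbound : ∀ x ∈ Ioc u (u + 1), m ≤ phi0 x := by
    intro x hx
    have hx1 : x ≤ |u| + 1 := le_trans hx.2 (by linarith [le_abs_self u])
    have hx2 : -(|u| + 1) ≤ x := le_trans (by linarith [neg_abs_le u]) hx.1.le
    have hsq : x ^ 2 ≤ (|u| + 1) ^ 2 := by nlinarith
    rw [hm, phi0]
    have := Real.exp_le_exp.mpr (show -(1/2) * (|u| + 1) ^ 2 ≤ -(1/2) * x ^ 2 by linarith)
    have h0 : (0:ℝ) ≤ (Real.sqrt (2 * π))⁻¹ := by positivity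
    exact mul_le_mul_of_nonneg_left this h0
  have hconc : ConcaveOn ℝ (Ici m) Real.log :=
    (strictConcaveOn_log_Ioi.concaveOn).subset
      (fun x hx => lt_of_lt_of_le hmpos hx) (convex_Ici m)
  have hcont : ContinuousOn Real.log (Ici m) :=
    Real.continuousOn_log.mono fun x hx => by
      simp only [mem_compl_iff, mem_singleton_iff]
      exact (lt_of_lt_of_le hmpos hx).ne'
  have hfs : ∀ᵐ x ∂(volume.restrict (Ioc u (u + 1))), phi0 x ∈ Ici m :=
    (ae_restrict_iff' measurableSet_Ioc).2 (ae_of_all _ fun x hx => hbound x hx)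
  have hfi : Integrable phi0 (volume.restrict (Ioc u (u + 1))) := I1.restrict
  have hgi : Integrable (Real.log ∘ phi0) (volume.restrict (Ioc u (u + 1))) := by
    have heq : Real.log ∘ phi0 = fun x => -(1/2) * Real.log (2 * π) - (1/2) * x ^ 2 := by
      funext x
      simp only [Function.comp_apply, log_phi0]
    rw [heq]
    exact ((continuous_const.sub (continuous_const.mul (continuous_pow 2))).integrableOn_Ioc)
  have hjen := hconc.le_map_integral hcont isClosed_Ici hfs hfi hgi
  calc -(1/2) * Real.log (2 * π) - (1/2) * (u ^ 2 + u + 1/3)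
      = ∫ x in Ioc u (u + 1), Real.log (phi0 x) := (int_log_phi0 u).symm
  _ ≤ Real.log (∫ s in Ioc u (u + 1), phi0 s) := hjen

lemma main_aux (A B c : ℝ) (hc : c ^ 2 + c = 0) (hB : B ≤ c) (hA : c + 1 ≤ A) :
    -(1 / 2) * Real.log (2 * π) - 2 / 3 ≤
      ∫ z, Real.log (stdCDF (A - z) - stdCDF (B - z)) ∂(gmeas 0 1) := by
  set f : ℝ → ℝ := fun z => Real.log (stdCDF (A - z) - stdCDF (B - z)) with hf
  set g : ℝ → ℝ :=
    fun z => -(1/2) * Real.log (2 * π) - (1/2) * ((c - z) ^ 2 + (c - z) + 1/3) with hg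
  have hAB : ∀ z : ℝ, B - z ≤ A - z := fun z => by linarith
  have hdiff_eq : ∀ z : ℝ, stdCDF (A - z) - stdCDF (B - z) = ∫ x in Ioc (B - z) (A - z), phi0 x :=
    fun z => stdCDF_sub_eq (hAB z)
  have hptw : ∀ z, g z ≤ f z := by
    intro z
    have h1 := key (c - z)
    have hsub : Ioc (c - z) (c - z + 1) ⊆ Ioc (B - z) (A - z) :=
      Ioc_subset_Ioc (by linarith) (by linarith)
    have h2 : ∫ s in Ioc (c - z) (c - z + 1), phi0 s ≤ ∫ x in Ioc (B - z) (A - z), phi0 x :=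
      setIntegral_mono_set I1.integrableOn (ae_of_all _ fun x => (phi0_pos x).le)
        (HasSubset.Subset.eventuallyLE hsub)
    have h3 : Real.log (∫ s in Ioc (c - z) (c - z + 1), phi0 s) ≤
        Real.log (stdCDF (A - z) - stdCDF (B - z)) := by
      rw [hdiff_eq z]
      exact Real.log_le_log (int_phi0_pos _) h2
    exact le_trans h1 h3
  have hg_int : Integrable g (gmeas 0 1) := by
    rw [integrable_gmeas_iff]
    have heq : (fun z => phi0 z * g z) = fun z =>
        (-(1/2) * Real.log (2 * π) - (1/2) * (c ^ 2 + c + 1/3)) * phi0 z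
          + (((2 * c + 1) / 2) * (phi0 z * z) + (-(1/2)) * (phi0 z * z ^ 2)) := by
      funext z; simp only [hg]; ring
    rw [heq]
    exact (I1.const_mul _).add ((I2.const_mul _).add (I3.const_mul _))
  have hmeas : Measurable f := by
    apply Real.measurable_log.comp
    exact ((stdCDF_mono.measurable).comp (measurable_const.sub measurable_id)).sub
      ((stdCDF_mono.measurable).comp (measurable_const.sub measurable_id))
  have hf0 : ∀ z, f z ≤ 0 := by
    intro z
    refine Real.log_nonpos ?_ ?_
    · rw [hdiff_eq z]
      exact setIntegral_nonneg measurableSet_Ioc fun x _ => (phi0_pos x).le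
    · have := stdCDF_le_one (A - z)
      have := stdCDF_nonneg (B - z)
      linarith
  have hg0 : ∀ z, g z ≤ 0 := by
    intro z
    have h2π : 0 ≤ Real.log (2 * π) := Real.log_nonneg (by nlinarith [Real.pi_gt_three])
    simp only [hg]
    nlinarith [sq_nonneg (c - z + 1/2)]
  have hf_int : Integrable f (gmeas 0 1) := by
    refine hg_int.mono hmeas.aestronglyMeasurable (ae_of_all _ fun z => ?_)
    rw [Real.norm_eq_abs, Real.norm_eq_abs, abs_of_nonpos (hf0 z), abs_of_nonpos (hg0 z)]
    exact neg_le_neg (hptw z)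
  have hgval : ∫ z, g z ∂(gmeas 0 1) = -(1/2) * Real.log (2 * π) - 2/3 := by
    rw [integral_gmeas]
    have heq : (fun z => phi0 z * g z) = fun z =>
        (-(1/2) * Real.log (2 * π) - (1/2) * (c ^ 2 + c + 1/3)) * phi0 z
          + (((2 * c + 1) / 2) * (phi0 z * z) + (-(1/2)) * (phi0 z * z ^ 2)) := by
      funext z; simp only [hg]; ring
    have ha : Integrable (fun z =>
        (-(1/2) * Real.log (2 * π) - (1/2) * (c ^ 2 + c + 1/3)) * phi0 z) volume :=
      I1.const_mul _
    have hb : Integrable (fun z => ((2 * c + 1) / 2) * (phi0 z * z)) volume := I2.const_mul _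
    have hcc : Integrable (fun z => (-(1/2)) * (phi0 z * z ^ 2)) volume := I3.const_mul _
    have hbc : Integrable (fun z => ((2 * c + 1) / 2) * (phi0 z * z)
        + (-(1/2)) * (phi0 z * z ^ 2)) volume := hb.add hcc
    rw [heq, integral_add ha hbc, integral_add hb hcc,
      integral_const_mul, integral_const_mul, integral_const_mul, C1, C2, C3]
    linear_combination (-1/2 : ℝ) * hc
  calc -(1 / 2) * Real.log (2 * π) - 2 / 3
      = ∫ z, g z ∂(gmeas 0 1) := hgval.symm
  _ ≤ ∫ z, f z ∂(gmeas 0 1) := integral_mono hg_int hf_int hptw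

end GWLBAux

/-- Inequality (A.2): uniformly in `v ∈ (0,1]`, `l ≥ 1`, `|θ| ≤ l`,
`E log Φ_{l,v} ≥ log φ(0) - 2/3 = -(1/2) log(2π) - 2/3`, where
`Φ_{l,v} = Φ(v^{-1/2}(l-θ) - Z) - Φ(v^{-1/2}(-l-θ) - Z)`. -/
theorem gaussian_window_log_expectation_bound (v l θ : ℝ)
    (hv : v ∈ Set.Ioc (0 : ℝ) 1) (hl : 1 ≤ l) (hθ : |θ| ≤ l) :
    -(1 / 2) * Real.log (2 * π) - 2 / 3 ≤
      ∫ z, Real.log (stdCDF ((l - θ) / Real.sqrt v - z)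
          - stdCDF ((-l - θ) / Real.sqrt v - z)) ∂(gmeas 0 1) := by
  obtain ⟨hv0, hv1⟩ := hv
  have hsv : 0 < Real.sqrt v := Real.sqrt_pos.mpr hv0
  have hsv1 : Real.sqrt v ≤ 1 := by
    rw [show (1:ℝ) = Real.sqrt 1 by simp]
    exact Real.sqrt_le_sqrt hv1
  obtain ⟨hθ1, hθ2⟩ := abs_le.mp hθ
  have hA0 : 0 ≤ (l - θ) / Real.sqrt v := div_nonneg (by linarith) hsv.le
  have hB0 : (-l - θ) / Real.sqrt v ≤ 0 :=
    div_nonpos_of_nonpos_of_nonneg (by linarith) hsv.le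
  have hgap : (l - θ) / Real.sqrt v - (-l - θ) / Real.sqrt v = 2 * l / Real.sqrt v := by
    field_simp
    ring
  have h2 : 2 ≤ 2 * l / Real.sqrt v := by
    rw [le_div_iff₀ hsv]
    nlinarith
  by_cases hcase : 1 ≤ (l - θ) / Real.sqrt v
  · exact GWLBAux.main_aux _ _ 0 (by ring) hB0 (by linarith)
  · refine GWLBAux.main_aux _ _ (-1) (by ring) (by linarith [not_le.mp hcase]) (by linarith)

end
end

section
/- (The exponent G is minimized at the bracketing grid index.) Fix r > 0, b ∈ (0,1], λ > 0, and define α_j, β_j, μ_j = λα_j as for the discrete sparse prior. For θ ≥ λ write θ = λ(α_l + ω) with l ≥ 1 and ω ∈ [0, α̇_l), so that θ ∈ [μ_l, μ_{l+1}), and define G(μ_j; θ) = μ_j²/2 − μ_j θ + (λ²/2)(β_j + r⁻¹) for j ≥ 1. Then the map j ↦ G(μ_j; θ) on j ≥ 1 is minimized at j = l: for every j with 1 ≤ j < l one has G(μ_j; θ) ≥ G(μ_{j+1}; θ), and for every j ≥ l one has G(μ_{j+1}; θ) ≥ G(μ_j; θ); moreover G(μ_{l+k+1}; θ) − G(μ_{l+k};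 θ) ≥ λ² α̇_{l+k}(α_{l+k+1} − α_{l+1}) ≥ 0 for all k ≥ 1. -/
open MeasureTheory ProbabilityTheory Real Filter Set

noncomputable section

/-- `G(μ_j; θ) = μ_j²/2 - μ_j θ + (λ²/2)(β_j + r⁻¹)`, `μ_j = λ α_j`. -/
def Gexp (r b lamv θ : ℝ) (j : ℕ) : ℝ :=
  (lamv * alphaD b j) ^ 2 / 2 - lamv * alphaD b j * θ + lamv ^ 2 / 2 * (betaD b j + r⁻¹)

lemma alphadot_eq (b : ℝ) (j : ℕ) :
    alphadot b j = if j < KD b then b else 1 := by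
  unfold alphadot alphaD
  rcases lt_or_ge j (KD b) with h | h
  · rw [if_pos (by omega : j + 1 ≤ KD b), if_pos h.le, if_pos h]; push_cast; ring
  · rcases eq_or_lt_of_le h with h2 | h2
    · subst h2
      rw [if_neg (by omega), if_pos (le_refl _), if_neg (by omega)]; push_cast; ring
    · rw [if_neg (by omega), if_neg (by omega), if_neg (by omega)]; push_cast; ring

lemma betadot_eq (b : ℝ) (j : ℕ) :
    betaD b (j + 1) - betaD b j = (alphadot b j) ^ 2 := by
  rw [alphadot_eq]
  unfold betaD
  rcases lt_or_ge j (KD b) with h | h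
  · rw [if_pos (by omega : j + 1 ≤ KD b), if_pos h.le, if_pos h]; push_cast; ring
  · rcases eq_or_lt_of_le h with h2 | h2
    · subst h2
      rw [if_neg (by omega), if_pos (le_refl _), if_neg (by omega)]; push_cast; ring
    · rw [if_neg (by omega), if_neg (by omega), if_neg (by omega)]; push_cast; ring

lemma alphadot_pos (b : ℝ) (hb : 0 < b) (j : ℕ) : 0 < alphadot b j := by
  rw [alphadot_eq]; split <;> [exact hb; exact one_pos]

lemma alphaD_mono (b : ℝ) (hb : 0 < b) : Monotone (alphaD b) := by
  apply monotone_nat_of_le_succ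
  intro j
  have := alphadot_pos b hb j
  unfold alphadot at this; linarith

lemma Gexp_diff' (r b lamv : ℝ) (l j : ℕ) (ω : ℝ) :
    Gexp r b lamv (lamv * (alphaD b l + ω)) (j + 1)
      - Gexp r b lamv (lamv * (alphaD b l + ω)) j
      = lamv ^ 2 * alphadot b j * (alphaD b (j + 1) - alphaD b l - ω) := by
  have hβ : betaD b (j + 1) = betaD b j + alphadot b j ^ 2 := by
    linarith [betadot_eq b j]
  unfold Gexp
  rw [hβ]
  unfold alphadot
  ring

/-- The exponent `j ↦ G(μ_j; θ)` is minimized at the bracketing index `l`, where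
`θ = λ(α_l + ω)` with `l ≥ 1`, `ω ∈ [0, α̇_l)`; moreover the increments beyond `l+1`
satisfy `G(μ_{l+k+1};θ) - G(μ_{l+k};θ) ≥ λ² α̇_{l+k}(α_{l+k+1} - α_{l+1}) ≥ 0`. -/
theorem Gexp_minimized_at_bracketing_index (r b lamv : ℝ) (hr : 0 < r)
    (hb : b ∈ Set.Ioc (0 : ℝ) 1) (hlam : 0 < lamv)
    (l : ℕ) (hl : 1 ≤ l) (ω : ℝ) (hω0 : 0 ≤ ω) (hω : ω < alphadot b l) :
    (∀ j : ℕ, 1 ≤ j → j < l →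
        Gexp r b lamv (lamv * (alphaD b l + ω)) (j + 1)
          ≤ Gexp r b lamv (lamv * (alphaD b l + ω)) j)
    ∧ (∀ j : ℕ, l ≤ j →
        Gexp r b lamv (lamv * (alphaD b l + ω)) j
          ≤ Gexp r b lamv (lamv * (alphaD b l + ω)) (j + 1))
    ∧ (∀ k : ℕ, 1 ≤ k →
        lamv ^ 2 * alphadot b (l + k) * (alphaD b (l + k + 1) - alphaD b (l + 1))
            ≤ Gexp r b lamv (lamv * (alphaD b l + ω)) (l + k + 1)
              - Gexp r b lamv (lamv * (alphaD b l + ω)) (l + k)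
          ∧ 0 ≤ lamv ^ 2 * alphadot b (l + k) * (alphaD b (l + k + 1) - alphaD b (l + 1))) := by
  have hb0 : 0 < b := hb.1
  have hmono := alphaD_mono b hb0
  have hsq : (0:ℝ) < lamv ^ 2 := by positivity
  refine ⟨fun j _ hj => ?_, fun j hj => ?_, fun k hk => ?_⟩
  · have h := Gexp_diff' r b lamv l j ω
    have h1 : alphaD b (j + 1) ≤ alphaD b l := hmono (by omega)
    have h2 := (alphadot_pos b hb0 j).le
    nlinarith [mul_nonneg (mul_nonneg hsq.le h2)
      (by linarith : (0:ℝ) ≤ alphaD b l + ω - alphaD b (j + 1))]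
  · have h := Gexp_diff' r b lamv l j ω
    have h1 : alphaD b (l + 1) ≤ alphaD b (j + 1) := hmono (by omega)
    have h2 := (alphadot_pos b hb0 j).le
    have h3 : alphaD b l + ω < alphaD b (l + 1) := by
      unfold alphadot at hω; linarith
    nlinarith [mul_nonneg (mul_nonneg hsq.le h2)
      (by linarith : (0:ℝ) ≤ alphaD b (j + 1) - alphaD b l - ω)]
  · have h := Gexp_diff' r b lamv l (l + k) ω
    have h1 : alphaD b (l + 1) ≤ alphaD b (l + k + 1) := hmono (by omega)
    have h2 := (alphadot_pos b hb0 (l + k)).le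
    have h3 : alphaD b l + ω < alphaD b (l + 1) := by
      unfold alphadot at hω; linarith
    constructor
    · rw [h]
      nlinarith [mul_nonneg (mul_nonneg hsq.le h2)
        (by linarith : (0:ℝ) ≤ alphaD b (l + 1) - alphaD b l - ω)]
    · exact mul_nonneg (mul_nonneg hsq.le h2) (by linarith)

end
end
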